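/- If every countable, finitely diseparable digraph whose underlying graph is 2-connected admits an optimal pair, then every weakly connected digraph admits an optimal pair; likewise, if every countable, finitely diseparable digraph whose underlying graph is 2-connected admits a nested optimal pair, then every weakly connected digraph admits a nested optimal pair. -/

import Mathlib

theorem Relation.ReflTransGen.mono_old {α : Type*} {r p : α → α → Prop} {a b : α}
    (h : Relation.ReflTransGen r a b) (f : ∀ a b, r a b → p a b) : Relation.ReflTransGen p a b :=
  Relation.ReflTransGen.mono f _ _ h


/-- A digraph with vertex type `V` and edge type `E`, allowing parallel edges. -/
structure MultiDigraph (V : Type*) (E : Type*) where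
  tail : E → V
  head : E → V

namespace MultiDigraph

variable {V : Type*} {E : Type*} (D : MultiDigraph V E)

/-- Adjacency in the underlying undirected multigraph. -/
def Adj (u v : V) : Prop :=
  ∃ e : E, (D.tail e = u ∧ D.head e = v) ∨ (D.tail e = v ∧ D.head e = u)

/-- The underlying undirected multigraph is connected. -/
def WeaklyConnected : Prop :=
  ∀ u v : V, Relation.ReflTransGen D.Adj u v

/-- `B` is the dicut of `D` whose in-shore is `X` (every edge of the cut has its
head in `X`, and no edge leaves `X`). -/
def DicutWith (X : Set V) (B : Set E) : Prop :=
  (∀ e : E, D.tail e ∈ X → D.head e ∈ X) ∧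
    B = {e : E | D.tail e ∉ X ∧ D.head e ∈ X}

/-- `B` is a dicut of `D`. -/
def IsDicut (B : Set E) : Prop :=
  ∃ X : Set V, D.DicutWith X B

/-- A dibond is a minimal non-empty dicut. -/
def IsDibond (B : Set E) : Prop :=
  D.IsDicut B ∧ B.Nonempty ∧
    ∀ B' : Set E, D.IsDicut B' → B'.Nonempty → B' ⊆ B → B' = B

/-- A dijoin meets every non-empty dicut. -/
def Dijoin (F : Set E) : Prop :=
  ∀ B : Set E, D.IsDicut B → B.Nonempty → (F ∩ B).Nonempty

/-- A finitary dijoin meets every non-empty finite dicut. -/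
def FinitaryDijoin (F : Set E) : Prop :=
  ∀ B : Set E, D.IsDicut B → B.Finite → B.Nonempty → (F ∩ B).Nonempty

/-- Two dicuts are nested if they have witnessing sides one of which is
`⊆`-comparable with a side of the other. -/
def NestedDicuts (B₁ B₂ : Set E) : Prop :=
  ∃ X₁ X₂ : Set V, D.DicutWith X₁ B₁ ∧ D.DicutWith X₂ B₂ ∧
    (X₁ ⊆ X₂ ∨ X₂ ⊆ X₁ ∨ X₁ ⊆ X₂ᶜ ∨ X₂ᶜ ⊆ X₁)

/-- An optimal pair: a set `ℬ` of pairwise disjoint finite dicuts and a finitary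
dijoin `F ⊆ ⋃ ℬ` meeting each member of `ℬ` in exactly one edge. -/
def OptimalPair (F : Set E) (ℬ : Set (Set E)) : Prop :=
  (∀ B ∈ ℬ, D.IsDicut B ∧ B.Finite) ∧
    ℬ.Pairwise Disjoint ∧
    D.FinitaryDijoin F ∧
    F ⊆ ⋃₀ ℬ ∧
    ∀ B ∈ ℬ, (F ∩ B).ncard = 1

/-- A nested optimal pair. -/
def NestedOptimalPair (F : Set E) (ℬ : Set (Set E)) : Prop :=
  D.OptimalPair F ℬ ∧ ℬ.Pairwise D.NestedDicuts

/-- The underlying multigraph contains no ray. -/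
def Rayless : Prop :=
  ¬ ∃ f : ℕ → V, Function.Injective f ∧ ∀ n : ℕ, D.Adj (f n) (f (n + 1))

/-- The (undirected) cut of `D` with side `X`: all edges with exactly one
endpoint in `X`. -/
def cutEdges (X : Set V) : Set E :=
  {e : E | (D.tail e ∈ X ∧ D.head e ∉ X) ∨ (D.tail e ∉ X ∧ D.head e ∈ X)}

/-- Any two distinct vertices are separated by a finite cut. -/
def FinitelySeparable : Prop :=
  ∀ v w : V, v ≠ w → ∃ X : Set V, (D.cutEdges X).Finite ∧ v ∈ X ∧ w ∉ X

/-- Any two distinct vertices lie on different sides of some finite dicut. -/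
def FinitelyDiseparable : Prop :=
  ∀ v w : V, v ≠ w → ∃ (X : Set V) (B : Set E), D.DicutWith X B ∧ B.Finite ∧
    ((v ∈ X ∧ w ∉ X) ∨ (v ∉ X ∧ w ∈ X))

/-- The underlying multigraph is 2-connected: it is connected and deleting any
single vertex keeps it connected. -/
def UnderlyingTwoConnected : Prop :=
  D.WeaklyConnected ∧ ∀ x u v : V, u ≠ x → v ≠ x →
    Relation.ReflTransGen (fun a b => a ≠ x ∧ b ≠ x ∧ D.Adj a b) u v

/-- `v ∼ w`: no finite dicut of `D` separates `v` and `w`. -/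
def Sim (v w : V) : Prop :=
  ∀ (X : Set V) (B : Set E), D.DicutWith X B → B.Finite → (v ∈ X ↔ w ∈ X)

/-- `W` is a witness for `v ∼ w`: it meets every finite cut separating `v`
and `w` in both directions. -/
def Witness (v w : V) (W : Set E) : Prop :=
  ∀ X : Set V, (D.cutEdges X).Finite → v ∈ X → w ∉ X →
    (∃ e ∈ W, D.tail e ∈ X ∧ D.head e ∉ X) ∧
    (∃ e ∈ W, D.tail e ∉ X ∧ D.head e ∈ X)

end MultiDigraph


/-! ### Auxiliary infrastructure for the reduction -/

open Relation Set


theorem delta_system_aux {α β : Type*} [DecidableEq β] :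
    ∀ (n : ℕ) (f : α → Finset β) (S : Set α), ¬ S.Countable →
      (∀ a ∈ S, (f a).card = n) →
      ∃ (R : Finset β) (T : Set α), T ⊆ S ∧ ¬ T.Countable ∧
        ∀ a ∈ T, ∀ b ∈ T, a ≠ b → f a ∩ f b = R := by
  intro n
  induction n with
  | zero =>
    intro f S hS hcard
    refine ⟨∅, S, Set.Subset.rfl, hS, ?_⟩
    intro a ha b hb _
    rw [Finset.card_eq_zero.mp (hcard a ha), Finset.empty_inter]
  | succ n ih =>
    intro f S hS hcard
    by_cases hx : ∃ x : β, ¬ {a | a ∈ S ∧ x ∈ f a}.Countable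
    · obtain ⟨x, hx⟩ := hx
      obtain ⟨R', T, hT1, hT2, hT3⟩ := ih (fun a => (f a).erase x)
        {a | a ∈ S ∧ x ∈ f a} hx (fun a ha => by
          rw [Finset.card_erase_of_mem ha.2, hcard a ha.1]; rfl)
      refine ⟨insert x R', T, fun a ha => (hT1 ha).1, hT2, ?_⟩
      intro a ha b hb hab
      have hxa : x ∈ f a := (hT1 ha).2
      have hxb : x ∈ f b := (hT1 hb).2
      have heq := hT3 a ha b hb hab
      ext y
      constructor
      · intro hy
        rw [Finset.mem_inter] at hy
        by_cases hyx : y = x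
        · exact Finset.mem_insert.mpr (Or.inl hyx)
        · refine Finset.mem_insert.mpr (Or.inr ?_)
          rw [← heq]
          exact Finset.mem_inter.mpr ⟨Finset.mem_erase.mpr ⟨hyx, hy.1⟩,
            Finset.mem_erase.mpr ⟨hyx, hy.2⟩⟩
      · intro hy
        rcases Finset.mem_insert.mp hy with rfl | hy
        · exact Finset.mem_inter.mpr ⟨hxa, hxb⟩
        · rw [← heq] at hy
          rw [Finset.mem_inter] at hy ⊢
          exact ⟨(Finset.mem_erase.mp hy.1).2, (Finset.mem_erase.mp hy.2).2⟩
    · push_neg at hx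
      have hchaincond : ∀ c ⊆ {T : Set α | T ⊆ S ∧ ∀ a ∈ T, ∀ b ∈ T, a ≠ b → f a ∩ f b = ∅},
          IsChain (· ⊆ ·) c →
          ∃ ub ∈ {T : Set α | T ⊆ S ∧ ∀ a ∈ T, ∀ b ∈ T, a ≠ b → f a ∩ f b = ∅},
            ∀ s ∈ c, s ⊆ ub := by
        intro c hc hchain
        refine ⟨⋃₀ c, ⟨?_, ?_⟩, fun s hs => Set.subset_sUnion_of_mem hs⟩
        · exact Set.sUnion_subset fun T hT => (hc hT).1
        · rintro a ⟨T₁, hT₁, ha⟩ b ⟨T₂, hT₂, hb⟩ hab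
          rcases hchain.total hT₁ hT₂ with hle | hle
          · exact (hc hT₂).2 a (hle ha) b hb hab
          · exact (hc hT₁).2 a ha b (hle hb) hab
      obtain ⟨M, hMmax⟩ := zorn_subset
        {T : Set α | T ⊆ S ∧ ∀ a ∈ T, ∀ b ∈ T, a ≠ b → f a ∩ f b = ∅} hchaincond
      by_cases hM : M.Countable
      · exfalso
        apply hS
        have hU : (⋃ a ∈ M, (f a : Set β)).Countable :=
          hM.biUnion fun a _ => (f a).countable_toSet
        have hsub : S ⊆ M ∪ ⋃ y ∈ (⋃ a ∈ M, (f a : Set β)), {a | a ∈ S ∧ y ∈ f a} := by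
          intro s hs
          by_cases hsM : s ∈ M
          · exact Or.inl hsM
          · by_contra hcon
            have hdisj : ∀ a ∈ M, f s ∩ f a = ∅ := by
              intro a ha
              rw [Finset.eq_empty_iff_forall_notMem]
              intro y hy
              rw [Finset.mem_inter] at hy
              exact hcon (Or.inr (Set.mem_biUnion (Set.mem_biUnion ha hy.2) ⟨hs, hy.1⟩))
            have hmem : insert s M ∈ {T : Set α | T ⊆ S ∧
                ∀ a ∈ T, ∀ b ∈ T, a ≠ b → f a ∩ f b = ∅} := by
              refine ⟨Set.insert_subset hs hMmax.1.1, ?_⟩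
              rintro a (rfl | ha) b (rfl | hb) hab
              · exact absurd rfl hab
              · exact hdisj b hb
              · rw [Finset.inter_comm]; exact hdisj a ha
              · exact hMmax.1.2 a ha b hb hab
            have := hMmax.2 hmem (Set.subset_insert s M)
            exact hsM (this (Set.mem_insert s M))
        refine (hM.union (hU.biUnion fun y _ => hx y)).mono hsub
      · exact ⟨∅, M, hMmax.1.1, hM, fun a ha b hb hab => hMmax.1.2 a ha b hb hab⟩

theorem delta_system {α β : Type*} [DecidableEq β] (f : α → Finset β) (S : Set α) (hS : ¬ S.Countable) :
    ∃ (R : Finset β) (T : Set α), T ⊆ S ∧ ¬ T.Countable ∧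
      ∀ a ∈ T, ∀ b ∈ T, a ≠ b → f a ∩ f b = R := by
  by_cases hall : ∀ n : ℕ, {a | a ∈ S ∧ (f a).card = n}.Countable
  · exfalso
    apply hS
    have hsub : S ⊆ ⋃ n : ℕ, {a | a ∈ S ∧ (f a).card = n} := fun a ha =>
      Set.mem_iUnion.mpr ⟨(f a).card, ha, rfl⟩
    exact (Set.countable_iUnion hall).mono hsub
  · push_neg at hall
    obtain ⟨n, hn⟩ := hall
    obtain ⟨R, T, hT1, hT2, hT3⟩ := delta_system_aux n f _ hn (fun a ha => ha.2)
    exact ⟨R, T, fun a ha => (hT1 ha).1, hT2, hT3⟩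


namespace MultiDigraph

variable {V : Type*} {E : Type*}

section Constructions

variable (D : MultiDigraph V E)

/-- The relation `Sim` is an equivalence relation. -/
def simSetoid : Setoid V :=
  ⟨D.Sim, ⟨fun _ _ _ _ _ => Iff.rfl, fun h X B hd hf => (h X B hd hf).symm,
    fun h1 h2 X B hd hf => (h1 X B hd hf).trans (h2 X B hd hf)⟩⟩

/-- The quotient of `D` by `Sim`. -/
def quotD : MultiDigraph (Quotient D.simSetoid) E where
  tail e := ⟦D.tail e⟧
  head e := ⟦D.head e⟧

/-- The loopless core of `D`. -/
def coreD : MultiDigraph V {e : E // D.tail e ≠ D.head e} where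
  tail e := D.tail e.1
  head e := D.head e.1

/-- Vertices incident with an edge set. -/
def vertsOf (A : Set E) : Set V := {v | ∃ e ∈ A, D.tail e = v ∨ D.head e = v}

/-- Adjacency using only edges from `A`. -/
def adjOn (A : Set E) (u v : V) : Prop :=
  ∃ e ∈ A, (D.tail e = u ∧ D.head e = v) ∨ (D.tail e = v ∧ D.head e = u)

/-- `A` is a nonseparable edge set: any two of its vertices are connected,
even after deleting any single vertex. -/
def NS (A : Set E) : Prop :=
  (∀ u ∈ D.vertsOf A, ∀ v ∈ D.vertsOf A, ReflTransGen (D.adjOn A) u v) ∧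
  ∀ (x u v : V), u ∈ D.vertsOf A → v ∈ D.vertsOf A → u ≠ x → v ≠ x →
    ReflTransGen (fun a b => a ≠ x ∧ b ≠ x ∧ D.adjOn A a b) u v

/-- A block: a maximal nonempty nonseparable edge set. -/
def IsBlock (A : Set E) : Prop :=
  A.Nonempty ∧ D.NS A ∧ ∀ A', D.NS A' → A ⊆ A' → A' = A

/-- The sub-digraph on an edge set. -/
def subD (A : Set E) : MultiDigraph (D.vertsOf A) A where
  tail e := ⟨D.tail e.1, ⟨e.1, e.2, Or.inl rfl⟩⟩
  head e := ⟨D.head e.1, ⟨e.1, e.2, Or.inr rfl⟩⟩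

/-- Connectivity avoiding a vertex set `S`. -/
def outConn (S : Set V) (u w : V) : Prop :=
  ReflTransGen (fun a b => a ∉ S ∧ b ∉ S ∧ D.Adj a b) u w

/-- The attachment set in `S` of the component (avoiding `S`) of `u`. -/
def attach (S : Set V) (u : V) : Set V :=
  {s | s ∈ S ∧ ∃ w, D.outConn S u w ∧ D.Adj w s}

/-- Extension of a shore `Y ⊆ vertsOf A` to a global shore. -/
def extShore (A : Set E) (Y : Set V) : Set V :=
  Y ∪ {u | u ∉ D.vertsOf A ∧ D.attach (D.vertsOf A) u ⊆ Y}

end Constructions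


/-- `Reach D S s w P I`: `P` is the edge set of a simple path from `s` to `w`
whose internal vertex set (everything except `s`) is `I`, avoiding `S`. -/
inductive Reach (D : MultiDigraph V E) (S : Set V) (s : V) : V → Set E → Set V → Prop
  | base {w : V} {e : E} (hw : w ∉ S) (hws : w ≠ s)
      (he : (D.tail e = s ∧ D.head e = w) ∨ (D.tail e = w ∧ D.head e = s)) :
      Reach D S s w {e} {w}
  | cons {w : V} {P : Set E} {I : Set V} {w' : V} {e : E}
      (hr : Reach D S s w P I) (hw' : w' ∉ S) (hwI : w' ∉ I) (hws : w' ≠ s)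
      (he : (D.tail e = w ∧ D.head e = w') ∨ (D.tail e = w' ∧ D.head e = w)) :
      Reach D S s w' (insert e P) (insert w' I)


section Lemmas

variable (D : MultiDigraph V E)

/-! #### Quotient step -/

theorem mem_quot_shore {X : Set V} {B : Set E} (h : D.DicutWith X B) (hB : B.Finite)
    (a : V) : Quotient.mk D.simSetoid a ∈ Quotient.mk D.simSetoid '' X ↔ a ∈ X := by
  constructor
  · rintro ⟨x, hx, hxa⟩
    exact ((Quotient.exact hxa : D.Sim x a) X B h hB).mp hx
  · intro ha; exact ⟨a, ha, rfl⟩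

theorem quot_dicut_of {X : Set V} {B : Set E} (h : D.DicutWith X B) (hB : B.Finite) :
    D.quotD.DicutWith (Quotient.mk D.simSetoid '' X) B := by
  constructor
  · intro e hte
    exact (D.mem_quot_shore h hB (D.head e)).mpr (h.1 e ((D.mem_quot_shore h hB (D.tail e)).mp hte))
  · rw [h.2]; ext e
    simp only [Set.mem_setOf_eq]
    constructor
    · rintro ⟨h1, h2⟩
      exact ⟨fun hh => h1 ((D.mem_quot_shore h hB (D.tail e)).mp hh),
        (D.mem_quot_shore h hB (D.head e)).mpr h2⟩
    · rintro ⟨h1, h2⟩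
      exact ⟨fun hh => h1 ((D.mem_quot_shore h hB (D.tail e)).mpr hh),
        (D.mem_quot_shore h hB (D.head e)).mp h2⟩

theorem dicut_of_quot {Y : Set (Quotient D.simSetoid)} {B : Set E}
    (h : D.quotD.DicutWith Y B) : D.DicutWith (Quotient.mk D.simSetoid ⁻¹' Y) B := by
  exact ⟨fun e he => h.1 e he, by rw [h.2]; rfl⟩

theorem quot_weaklyConnected (h : D.WeaklyConnected) : D.quotD.WeaklyConnected := by
  intro q1 q2
  induction q1 using Quotient.ind with | _ a =>
  induction q2 using Quotient.ind with | _ b =>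
  refine ReflTransGen.lift (Quotient.mk D.simSetoid) ?_ _ _ (h a b)
  rintro x y ⟨e, he⟩
  refine ⟨e, ?_⟩
  rcases he with ⟨h1, h2⟩ | ⟨h1, h2⟩
  · exact Or.inl ⟨congrArg _ h1, congrArg _ h2⟩
  · exact Or.inr ⟨congrArg _ h1, congrArg _ h2⟩

theorem quot_diseparable : D.quotD.FinitelyDiseparable := by
  intro q1 q2 hne
  induction q1 using Quotient.ind with | _ a =>
  induction q2 using Quotient.ind with | _ b =>
  have hsim : ¬ D.Sim a b := fun hs => hne (Quotient.sound hs)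
  simp only [Sim, not_forall] at hsim
  obtain ⟨X, B, hd, hB, hiff⟩ := hsim
  refine ⟨Quotient.mk D.simSetoid '' X, B, D.quot_dicut_of hd hB, hB, ?_⟩
  by_cases ha : a ∈ X
  · exact Or.inl ⟨(D.mem_quot_shore hd hB a).mpr ha,
      fun hb => hiff ⟨fun _ => (D.mem_quot_shore hd hB b).mp hb, fun _ => ha⟩⟩
  · refine Or.inr ⟨fun hh => ha ((D.mem_quot_shore hd hB a).mp hh), ?_⟩
    refine (D.mem_quot_shore hd hB b).mpr ?_
    by_contra hb
    exact hiff ⟨fun hx => absurd hx ha, fun hx => absurd hx hb⟩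

theorem optimalPair_quot {F : Set E} {ℬ : Set (Set E)} (h : D.quotD.OptimalPair F ℬ) :
    D.OptimalPair F ℬ := by
  obtain ⟨h1, h2, h3, h4, h5⟩ := h
  refine ⟨fun B hB => ⟨?_, (h1 B hB).2⟩, h2, ?_, h4, h5⟩
  · obtain ⟨Y, hY⟩ := (h1 B hB).1
    exact ⟨_, D.dicut_of_quot hY⟩
  · intro B hB hBf hBn
    obtain ⟨X, hX⟩ := hB
    exact h3 B ⟨_, D.quot_dicut_of hX hBf⟩ hBf hBn

theorem nested_quot {ℬ : Set (Set E)} (h : ℬ.Pairwise D.quotD.NestedDicuts) :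
    ℬ.Pairwise D.NestedDicuts := by
  intro B1 hm1 B2 hm2 hne
  obtain ⟨Y1, Y2, hd1, hd2, hopt⟩ := h hm1 hm2 hne
  refine ⟨_, _, D.dicut_of_quot hd1, D.dicut_of_quot hd2, ?_⟩
  rcases hopt with hs | hs | hs | hs
  · exact Or.inl (Set.preimage_mono hs)
  · exact Or.inr (Or.inl (Set.preimage_mono hs))
  · refine Or.inr (Or.inr (Or.inl ?_))
    rw [← Set.preimage_compl]; exact Set.preimage_mono hs
  · refine Or.inr (Or.inr (Or.inr ?_))
    rw [← Set.preimage_compl]; exact Set.preimage_mono hs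

/-! #### Loopless core step -/

theorem core_loopless (e : {e : E // D.tail e ≠ D.head e}) :
    D.coreD.tail e ≠ D.coreD.head e := e.2

theorem core_dicut_of {X : Set V} {B : Set E} (h : D.DicutWith X B) :
    D.coreD.DicutWith X (Subtype.val ⁻¹' B) := by
  exact ⟨fun e he => h.1 e.1 he, by rw [h.2]; rfl⟩

theorem dicut_of_core {X : Set V} {B₂ : Set {e : E // D.tail e ≠ D.head e}}
    (h : D.coreD.DicutWith X B₂) : D.DicutWith X (Subtype.val '' B₂) := by
  constructor
  · intro e he
    by_cases hne : D.tail e = D.head e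
    · rwa [← hne]
    · exact h.1 ⟨e, hne⟩ he
  · ext e
    constructor
    · rintro ⟨e2, he2, rfl⟩
      have := h.2 ▸ he2
      exact this
    · intro he
      have hne : D.tail e ≠ D.head e := fun hh => he.1 (hh ▸ he.2)
      exact ⟨⟨e, hne⟩, by rw [h.2]; exact he, rfl⟩

theorem core_weaklyConnected (h : D.WeaklyConnected) : D.coreD.WeaklyConnected := by
  intro u v
  induction h u v with
  | refl => exact ReflTransGen.refl
  | tail _ hadj ih =>
    rename_i b c _
    rcases eq_or_ne b c with rfl | hbc
    · exact ih
    · obtain ⟨e, he⟩ := hadj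
      rcases he with ⟨h1, h2⟩ | ⟨h1, h2⟩
      · exact ih.tail ⟨⟨e, by rw [h1, h2]; exact hbc⟩, Or.inl ⟨h1, h2⟩⟩
      · exact ih.tail ⟨⟨e, by rw [h1, h2]; exact hbc.symm⟩, Or.inr ⟨h1, h2⟩⟩

theorem core_diseparable (h : D.FinitelyDiseparable) : D.coreD.FinitelyDiseparable := by
  intro u w huw
  obtain ⟨X, B, hd, hB, hside⟩ := h u w huw
  exact ⟨X, Subtype.val ⁻¹' B, D.core_dicut_of hd, hB.preimage Subtype.val_injective.injOn, hside⟩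

theorem optimalPair_core {F : Set {e : E // D.tail e ≠ D.head e}}
    {ℬ : Set (Set {e : E // D.tail e ≠ D.head e})} (h : D.coreD.OptimalPair F ℬ) :
    D.OptimalPair (Subtype.val '' F) ((Set.image Subtype.val) '' ℬ) := by
  obtain ⟨h1, h2, h3, h4, h5⟩ := h
  refine ⟨?_, ?_, ?_, ?_, ?_⟩
  · rintro B ⟨B2, hB2, rfl⟩
    obtain ⟨X, hX⟩ := (h1 B2 hB2).1
    exact ⟨⟨X, D.dicut_of_core hX⟩, (h1 B2 hB2).2.image _⟩
  · rintro B ⟨B2, hB2, rfl⟩ B' ⟨B2', hB2', rfl⟩ hne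
    have hne2 : B2 ≠ B2' := fun hh => hne (by rw [hh])
    exact (Set.disjoint_image_iff Subtype.val_injective).mpr (h2 hB2 hB2' hne2)
  · intro B hB hBf hBn
    obtain ⟨X, hX⟩ := hB
    have hB2 : (Subtype.val ⁻¹' B : Set {e : E // D.tail e ≠ D.head e}).Nonempty := by
      obtain ⟨e, he⟩ := hBn
      have he' := hX.2 ▸ he
      have hne : D.tail e ≠ D.head e := fun hh => he'.1 (hh ▸ he'.2)
      exact ⟨⟨e, hne⟩, by rw [Set.mem_preimage]; exact he⟩
    obtain ⟨f, hf⟩ := h3 _ ⟨X, D.core_dicut_of hX⟩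
      (hBf.preimage Subtype.val_injective.injOn) hB2
    exact ⟨f.1, ⟨f, hf.1, rfl⟩, hf.2⟩
  · rintro e ⟨f, hf, rfl⟩
    obtain ⟨B2, hB2, hfB2⟩ := h4 hf
    exact ⟨Subtype.val '' B2, ⟨B2, hB2, rfl⟩, ⟨f, hfB2, rfl⟩⟩
  · rintro B ⟨B2, hB2, rfl⟩
    rw [← Set.image_inter Subtype.val_injective,
      Set.ncard_image_of_injective _ Subtype.val_injective]
    exact h5 B2 hB2

theorem nested_core {ℬ : Set (Set {e : E // D.tail e ≠ D.head e})}
    (hB : ∀ B ∈ ℬ, D.coreD.IsDicut B)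
    (h : ℬ.Pairwise D.coreD.NestedDicuts) :
    ((Set.image Subtype.val) '' ℬ).Pairwise D.NestedDicuts := by
  rintro B ⟨B2, hB2, rfl⟩ B' ⟨B2', hB2', rfl⟩ hne
  have hne2 : B2 ≠ B2' := fun hh => hne (by rw [hh])
  obtain ⟨X1, X2, hd1, hd2, hopt⟩ := h hB2 hB2' hne2
  exact ⟨X1, X2, D.dicut_of_core hd1, D.dicut_of_core hd2, hopt⟩

/-! #### Blocks -/

theorem vertsOf_mono {A A' : Set E} (h : A ⊆ A') : D.vertsOf A ⊆ D.vertsOf A' := by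
  rintro w ⟨e, he, hw⟩; exact ⟨e, h he, hw⟩

theorem adjOn_mono {A A' : Set E} (h : A ⊆ A') {a b : V} (ha : D.adjOn A a b) :
    D.adjOn A' a b := by
  obtain ⟨e, he, hh⟩ := ha; exact ⟨e, h he, hh.symm.symm⟩

theorem adjOn_symm {A : Set E} {a b : V} (ha : D.adjOn A a b) : D.adjOn A b a := by
  obtain ⟨e, he, hh⟩ := ha; exact ⟨e, he, hh.symm⟩

theorem adjOn_mem_left {A : Set E} {a b : V} (ha : D.adjOn A a b) : a ∈ D.vertsOf A := by
  obtain ⟨e, he, hh⟩ := ha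
  rcases hh with ⟨h1, h2⟩ | ⟨h1, h2⟩
  · exact ⟨e, he, Or.inl h1⟩
  · exact ⟨e, he, Or.inr h2⟩

theorem adjOn_mem_right {A : Set E} {a b : V} (ha : D.adjOn A a b) : b ∈ D.vertsOf A :=
  D.adjOn_mem_left (D.adjOn_symm ha)

theorem adjOn_adj {A : Set E} {a b : V} (ha : D.adjOn A a b) : D.Adj a b := by
  obtain ⟨e, _, hh⟩ := ha; exact ⟨e, hh⟩

theorem ns_singleton (e : E) : D.NS {e} := by
  have hv : ∀ w, w ∈ D.vertsOf {e} → w = D.tail e ∨ w = D.head e := by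
    rintro w ⟨f, hf, hw⟩
    rw [Set.mem_singleton_iff] at hf
    subst hf
    rcases hw with h | h
    · exact Or.inl h.symm
    · exact Or.inr h.symm
  have adj : D.adjOn {e} (D.tail e) (D.head e) := ⟨e, rfl, Or.inl ⟨rfl, rfl⟩⟩
  constructor
  · intro u hu v hv'
    rcases hv u hu with rfl | rfl <;> rcases hv v hv' with rfl | rfl
    · exact ReflTransGen.refl
    · exact ReflTransGen.single adj
    · exact ReflTransGen.single (D.adjOn_symm adj)
    · exact ReflTransGen.refl
  · intro x u v' hu hv' hux hvx
    rcases hv u hu with rfl | rfl <;> rcases hv v' hv' with rfl | rfl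
    · exact ReflTransGen.refl
    · exact ReflTransGen.single ⟨hux, hvx, adj⟩
    · exact ReflTransGen.single ⟨hux, hvx, D.adjOn_symm adj⟩
    · exact ReflTransGen.refl

theorem ns_union {A₁ A₂ : Set E} (h₁ : D.NS A₁) (h₂ : D.NS A₂) {s t : V} (hst : s ≠ t)
    (hs₁ : s ∈ D.vertsOf A₁) (hs₂ : s ∈ D.vertsOf A₂)
    (ht₁ : t ∈ D.vertsOf A₁) (ht₂ : t ∈ D.vertsOf A₂) : D.NS (A₁ ∪ A₂) := by
  have hsub : ∀ w, w ∈ D.vertsOf (A₁ ∪ A₂) → w ∈ D.vertsOf A₁ ∨ w ∈ D.vertsOf A₂ := by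
    rintro w ⟨e, he, hw⟩
    rcases he with he | he
    · exact Or.inl ⟨e, he, hw⟩
    · exact Or.inr ⟨e, he, hw⟩
  constructor
  · have c1 : ∀ u ∈ D.vertsOf A₁, ∀ v ∈ D.vertsOf A₁,
        ReflTransGen (D.adjOn (A₁ ∪ A₂)) u v := fun u hu v hv =>
      (h₁.1 u hu v hv).mono_old fun a b => D.adjOn_mono Set.subset_union_left
    have c2 : ∀ u ∈ D.vertsOf A₂, ∀ v ∈ D.vertsOf A₂,
        ReflTransGen (D.adjOn (A₁ ∪ A₂)) u v := fun u hu v hv =>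
      (h₂.1 u hu v hv).mono_old fun a b => D.adjOn_mono Set.subset_union_right
    intro u hu v hv
    rcases hsub u hu with hu1 | hu1 <;> rcases hsub v hv with hv1 | hv1
    · exact c1 u hu1 v hv1
    · exact (c1 u hu1 s hs₁).trans (c2 s hs₂ v hv1)
    · exact (c2 u hu1 s hs₂).trans (c1 s hs₁ v hv1)
    · exact c2 u hu1 v hv1
  · intro x u v hu hv hux hvx
    obtain ⟨s', hs'1, hs'2, hs'x⟩ : ∃ s', s' ∈ D.vertsOf A₁ ∧ s' ∈ D.vertsOf A₂ ∧ s' ≠ x := by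
      rcases eq_or_ne s x with rfl | hsx
      · exact ⟨t, ht₁, ht₂, fun h => hst (h ▸ rfl)⟩
      · exact ⟨s, hs₁, hs₂, hsx⟩
    have c1 : ∀ a, a ∈ D.vertsOf A₁ → a ≠ x → ∀ b, b ∈ D.vertsOf A₁ → b ≠ x →
        ReflTransGen (fun a b => a ≠ x ∧ b ≠ x ∧ D.adjOn (A₁ ∪ A₂) a b) a b :=
      fun a ha hax b hb hbx => (h₁.2 x a b ha hb hax hbx).mono_old
        fun p q hpq => ⟨hpq.1, hpq.2.1, D.adjOn_mono Set.subset_union_left hpq.2.2⟩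
    have c2 : ∀ a, a ∈ D.vertsOf A₂ → a ≠ x → ∀ b, b ∈ D.vertsOf A₂ → b ≠ x →
        ReflTransGen (fun a b => a ≠ x ∧ b ≠ x ∧ D.adjOn (A₁ ∪ A₂) a b) a b :=
      fun a ha hax b hb hbx => (h₂.2 x a b ha hb hax hbx).mono_old
        fun p q hpq => ⟨hpq.1, hpq.2.1, D.adjOn_mono Set.subset_union_right hpq.2.2⟩
    rcases hsub u hu with hu1 | hu1 <;> rcases hsub v hv with hv1 | hv1
    · exact c1 u hu1 hux v hv1 hvx
    · exact (c1 u hu1 hux s' hs'1 hs'x).trans (c2 s' hs'2 hs'x v hv1 hvx)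
    · exact (c2 u hu1 hux s' hs'2 hs'x).trans (c1 s' hs'1 hs'x v hv1 hvx)
    · exact c2 u hu1 hux v hv1 hvx

theorem exists_block (hl : ∀ e : E, D.tail e ≠ D.head e) (e : E) :
    ∃ A, D.IsBlock A ∧ e ∈ A := by
  have hz := zorn_subset_nonempty {A : Set E | D.NS A ∧ e ∈ A} ?_ {e} ⟨D.ns_singleton e, rfl⟩
  · obtain ⟨m, hsub, hmax⟩ := hz
    refine ⟨m, ⟨⟨e, hmax.1.2⟩, hmax.1.1, fun A2 hA2 hup => ?_⟩, hmax.1.2⟩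
    exact Set.Subset.antisymm (hmax.2 ⟨hA2, hup hmax.1.2⟩ hup) hup
  · intro c hc hchain hcne
    refine ⟨⋃₀ c, ⟨?_, ?_⟩, fun s hs => Set.subset_sUnion_of_mem hs⟩
    · have hsub : ∀ w, w ∈ D.vertsOf (⋃₀ c) → ∃ A ∈ c, w ∈ D.vertsOf A := by
        rintro w ⟨f, ⟨A, hA, hfA⟩, hw⟩
        exact ⟨A, hA, f, hfA, hw⟩
      constructor
      · intro u hu v hv
        obtain ⟨A1, hA1, hu1⟩ := hsub u hu
        obtain ⟨A2, hA2, hv2⟩ := hsub v hv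
        rcases hchain.total hA1 hA2 with hle | hle
        · exact ((hc hA2).1.1 u (D.vertsOf_mono hle hu1) v hv2).mono_old
            fun a b => D.adjOn_mono (Set.subset_sUnion_of_mem hA2)
        · exact ((hc hA1).1.1 u hu1 v (D.vertsOf_mono hle hv2)).mono_old
            fun a b => D.adjOn_mono (Set.subset_sUnion_of_mem hA1)
      · intro x u v hu hv hux hvx
        obtain ⟨A1, hA1, hu1⟩ := hsub u hu
        obtain ⟨A2, hA2, hv2⟩ := hsub v hv
        rcases hchain.total hA1 hA2 with hle | hle
        · exact ((hc hA2).1.2 x u v (D.vertsOf_mono hle hu1) hv2 hux hvx).mono_old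
            fun p q hpq => ⟨hpq.1, hpq.2.1, D.adjOn_mono (Set.subset_sUnion_of_mem hA2) hpq.2.2⟩
        · exact ((hc hA1).1.2 x u v hu1 (D.vertsOf_mono hle hv2) hux hvx).mono_old
            fun p q hpq => ⟨hpq.1, hpq.2.1, D.adjOn_mono (Set.subset_sUnion_of_mem hA1) hpq.2.2⟩
    · obtain ⟨A, hA⟩ := hcne
      exact Set.mem_sUnion.mpr ⟨A, hA, (hc hA).2⟩

theorem block_absorb {A A' : Set E} (hA : D.IsBlock A) (hA' : D.NS A') {s t : V} (hst : s ≠ t)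
    (hs₁ : s ∈ D.vertsOf A) (hs₂ : s ∈ D.vertsOf A')
    (ht₁ : t ∈ D.vertsOf A) (ht₂ : t ∈ D.vertsOf A') : A' ⊆ A := by
  have := hA.2.2 (A ∪ A') (D.ns_union hA.2.1 hA' hst hs₁ hs₂ ht₁ ht₂) Set.subset_union_left
  rw [← this]
  exact Set.subset_union_right

theorem edge_mem_block {A : Set E} (hA : D.IsBlock A) {e : E} (he : D.tail e ≠ D.head e)
    (h1 : D.tail e ∈ D.vertsOf A) (h2 : D.head e ∈ D.vertsOf A) : e ∈ A := by
  have hsub := D.block_absorb hA (D.ns_singleton e) he h1 ⟨e, rfl, Or.inl rfl⟩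
    h2 ⟨e, rfl, Or.inr rfl⟩
  exact hsub rfl

theorem blocks_verts_share_le_one {A₁ A₂ : Set E} (h₁ : D.IsBlock A₁) (h₂ : D.IsBlock A₂)
    (hne : A₁ ≠ A₂) : (D.vertsOf A₁ ∩ D.vertsOf A₂).Subsingleton := by
  intro s hs t ht
  by_contra hst
  have h21 := D.block_absorb h₁ h₂.2.1 hst hs.1 hs.2 ht.1 ht.2
  have h12 := D.block_absorb h₂ h₁.2.1 hst hs.2 hs.1 ht.2 ht.1
  exact hne (Set.Subset.antisymm h12 h21)

theorem blocks_disjoint (hl : ∀ e : E, D.tail e ≠ D.head e) {A₁ A₂ : Set E}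
    (h₁ : D.IsBlock A₁) (h₂ : D.IsBlock A₂) (hne : A₁ ≠ A₂) : Disjoint A₁ A₂ := by
  rw [Set.disjoint_left]
  intro e he1 he2
  exact hl e (D.blocks_verts_share_le_one h₁ h₂ hne
    ⟨⟨e, he1, Or.inl rfl⟩, ⟨e, he2, Or.inl rfl⟩⟩ ⟨⟨e, he1, Or.inr rfl⟩, ⟨e, he2, Or.inr rfl⟩⟩)

theorem sub_adj {A : Set E} {a b : D.vertsOf A} (h : D.adjOn A a.1 b.1) :
    (D.subD A).Adj a b := by
  obtain ⟨e, he, hor⟩ := h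
  refine ⟨⟨e, he⟩, ?_⟩
  rcases hor with ⟨h1, h2⟩ | ⟨h1, h2⟩
  · exact Or.inl ⟨Subtype.ext h1, Subtype.ext h2⟩
  · exact Or.inr ⟨Subtype.ext h1, Subtype.ext h2⟩

theorem sub_twoConnected {A : Set E} (hA : D.IsBlock A) :
    (D.subD A).UnderlyingTwoConnected := by
  constructor
  · intro a b
    have lift1 : ∀ {u v : V}, ReflTransGen (D.adjOn A) u v →
        ∀ (hu : u ∈ D.vertsOf A) (hv : v ∈ D.vertsOf A),
        ReflTransGen (D.subD A).Adj ⟨u, hu⟩ ⟨v, hv⟩ := by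
      intro u v h
      induction h with
      | refl => intro hu hv; exact ReflTransGen.refl
      | tail _ hadj ih =>
        intro hu hv
        have hb := D.adjOn_mem_left hadj
        exact (ih hu hb).tail (D.sub_adj hadj)
    exact lift1 (hA.2.1.1 a.1 a.2 b.1 b.2) a.2 b.2
  · intro x a b hax hbx
    have lift2 : ∀ {u v : V},
        ReflTransGen (fun p q => p ≠ x.1 ∧ q ≠ x.1 ∧ D.adjOn A p q) u v →
        ∀ (hu : u ∈ D.vertsOf A) (hv : v ∈ D.vertsOf A),
        ReflTransGen (fun p q => p ≠ x ∧ q ≠ x ∧ (D.subD A).Adj p q) ⟨u, hu⟩ ⟨v, hv⟩ := by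
      intro u v h
      induction h with
      | refl => intro hu hv; exact ReflTransGen.refl
      | tail _ hadj ih =>
        intro hu hv
        have hb := D.adjOn_mem_left hadj.2.2
        exact (ih hu hb).tail
          ⟨fun h => hadj.1 (congrArg Subtype.val h), fun h => hadj.2.1 (congrArg Subtype.val h), D.sub_adj hadj.2.2⟩
    have hax' : a.1 ≠ x.1 := fun h => hax (Subtype.ext h)
    have hbx' : b.1 ≠ x.1 := fun h => hbx (Subtype.ext h)
    exact lift2 (hA.2.1.2 x.1 a.1 b.1 a.2 b.2 hax' hbx') a.2 b.2

theorem restrict_dicut {A : Set E} {X : Set V} {B : Set E} (h : D.DicutWith X B) :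
    (D.subD A).DicutWith {w : D.vertsOf A | w.1 ∈ X} (Subtype.val ⁻¹' B) := by
  exact ⟨fun e he => h.1 e.1 he, by rw [h.2]; rfl⟩

theorem sub_diseparable {A : Set E} (hd : D.FinitelyDiseparable) :
    (D.subD A).FinitelyDiseparable := by
  intro u v huv
  obtain ⟨X, B, hdi, hB, hside⟩ := hd u.1 v.1 fun h => huv (Subtype.ext h)
  exact ⟨{w : D.vertsOf A | w.1 ∈ X}, Subtype.val ⁻¹' B, D.restrict_dicut hdi,
    hB.preimage Subtype.val_injective.injOn, hside⟩

/-! #### Attachments and extension of shores -/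


/-! #### Properties of `Reach` -/

theorem vertsOf_insert (e : E) (P : Set E) :
    D.vertsOf (insert e P) = {D.tail e, D.head e} ∪ D.vertsOf P := by
  ext w
  constructor
  · rintro ⟨f, hf, hw⟩
    rcases hf with rfl | hf
    · rcases hw with h | h
      · exact Or.inl (Or.inl h.symm)
      · exact Or.inl (Or.inr h.symm)
    · exact Or.inr ⟨f, hf, hw⟩
  · rintro ((rfl | rfl) | ⟨f, hf, hw⟩)
    · exact ⟨e, Set.mem_insert _ _, Or.inl rfl⟩
    · exact ⟨e, Set.mem_insert _ _, Or.inr rfl⟩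
    · exact ⟨f, Set.mem_insert_of_mem _ hf, hw⟩

theorem vertsOf_singleton (e : E) : D.vertsOf {e} = {D.tail e, D.head e} := by
  ext w
  constructor
  · rintro ⟨f, hf, hw⟩
    rw [Set.mem_singleton_iff] at hf; subst hf
    rcases hw with h | h
    · exact Or.inl h.symm
    · exact Or.inr h.symm
  · rintro (rfl | rfl)
    · exact ⟨e, rfl, Or.inl rfl⟩
    · exact ⟨e, rfl, Or.inr rfl⟩

theorem reach_mem_last {S : Set V} {s w : V} {P : Set E} {I : Set V}
    (h : Reach D S s w P I) : w ∈ I := by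
  cases h with
  | base _ _ _ => exact rfl
  | cons _ _ _ _ _ => exact Set.mem_insert _ _

theorem reach_disjoint {S : Set V} {s w : V} {P : Set E} {I : Set V}
    (h : Reach D S s w P I) : (∀ y ∈ I, y ∉ S) ∧ s ∉ I := by
  induction h with
  | base hw hws _ =>
    exact ⟨fun y hy => by rw [Set.mem_singleton_iff] at hy; rwa [hy], fun hs =>
      hws (Set.mem_singleton_iff.mp hs).symm⟩
  | cons _ hw' hwI hws _ ih =>
    constructor
    · rintro y (rfl | hy)
      · exact hw'
      · exact ih.1 y hy
    · rintro (h | h)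
      · exact hws h.symm
      · exact ih.2 h

theorem reach_finite {S : Set V} {s w : V} {P : Set E} {I : Set V}
    (h : Reach D S s w P I) : P.Finite ∧ I.Finite := by
  induction h with
  | base _ _ _ => exact ⟨Set.finite_singleton _, Set.finite_singleton _⟩
  | cons _ _ _ _ _ ih => exact ⟨ih.1.insert _, ih.2.insert _⟩

theorem reach_verts {S : Set V} {s w : V} {P : Set E} {I : Set V}
    (h : Reach D S s w P I) : D.vertsOf P = insert s I := by
  induction h with
  | base hw hws he =>
    rw [D.vertsOf_singleton]
    rcases he with ⟨h1, h2⟩ | ⟨h1, h2⟩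
    · rw [h1, h2]
    · rw [h1, h2, Set.pair_comm]
  | cons hr hw' hwI hws he ih =>
    rename_i w0 P0 I0 w'0 e0
    rw [D.vertsOf_insert, ih]
    have hw0 : w0 ∈ I0 := D.reach_mem_last hr
    have hends : ({D.tail e0, D.head e0} : Set V) = {w0, w'0} := by
      rcases he with ⟨h1, h2⟩ | ⟨h1, h2⟩
      · rw [h1, h2]
      · rw [h1, h2]; ext y
        simp only [Set.mem_insert_iff, Set.mem_singleton_iff]; tauto
    rw [hends]
    ext y
    simp only [Set.mem_union, Set.mem_insert_iff, Set.mem_singleton_iff]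
    constructor
    · rintro ((rfl | rfl) | rfl | hy)
      · exact Or.inr (Or.inr hw0)
      · exact Or.inr (Or.inl rfl)
      · exact Or.inl rfl
      · exact Or.inr (Or.inr hy)
    · rintro (rfl | rfl | hy)
      · exact Or.inr (Or.inl rfl)
      · exact Or.inl (Or.inr rfl)
      · exact Or.inr (Or.inr hy)

theorem reach_adj_last {S : Set V} {s w : V} {P : Set E} {I : Set V}
    (h : Reach D S s w P I) : True := trivial

theorem reach_conn_s {S : Set V} {s w : V} {P : Set E} {I : Set V}
    (h : Reach D S s w P I) : ∀ y ∈ insert s I, ReflTransGen (D.adjOn P) y s := by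
  induction h with
  | base hw hws he =>
    rename_i w0 e0
    rintro y (rfl | hy)
    · exact ReflTransGen.refl
    · rw [Set.mem_singleton_iff] at hy; subst hy
      exact ReflTransGen.single ⟨e0, rfl, he.symm⟩
  | cons hr hw' hwI hws he ih =>
    rename_i w0 P0 I0 w'0 e0
    have hmono : ∀ {a b : V}, ReflTransGen (D.adjOn P0) a b →
        ReflTransGen (D.adjOn (insert e0 P0)) a b := fun h =>
      h.mono_old fun a b => D.adjOn_mono (Set.subset_insert _ _)
    rintro y (rfl | rfl | hy)
    · exact ReflTransGen.refl
    · refine ReflTransGen.trans (ReflTransGen.single ?_)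
        (hmono (ih w0 (Set.mem_insert_of_mem _ (D.reach_mem_last hr))))
      exact ⟨e0, Set.mem_insert _ _, he.symm⟩
    · exact hmono (ih y (Set.mem_insert_of_mem _ hy))

theorem rtg_avoid_of_not_mem {P : Set E} {x y z : V}
    (h : ReflTransGen (D.adjOn P) y z) (hx : x ∉ D.vertsOf P) :
    ReflTransGen (fun a b => a ≠ x ∧ b ≠ x ∧ D.adjOn P a b) y z :=
  h.mono_old fun a b hab => ⟨fun h' => hx (h' ▸ D.adjOn_mem_left hab),
    fun h' => hx (h' ▸ D.adjOn_mem_right hab), hab⟩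

theorem rtg_avoid_last_ne {r : V → V → Prop} {x y z : V}
    (h : ReflTransGen (fun a b => a ≠ x ∧ b ≠ x ∧ r a b) y z) (hy : y ≠ x) : z ≠ x := by
  induction h with
  | refl => exact hy
  | tail _ hstep _ => exact hstep.2.1

theorem reach_inv {S : Set V} {s w : V} {P : Set E} {I : Set V}
    (h : Reach D S s w P I) : ∀ x y, y ∈ insert s I → y ≠ x →
      ReflTransGen (fun a b => a ≠ x ∧ b ≠ x ∧ D.adjOn P a b) y s ∨
      ReflTransGen (fun a b => a ≠ x ∧ b ≠ x ∧ D.adjOn P a b) y w := by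
  induction h with
  | base hw hws he =>
    rename_i w0 e0
    rintro x y (rfl | hy) hyx
    · exact Or.inl ReflTransGen.refl
    · rw [Set.mem_singleton_iff] at hy; subst hy
      exact Or.inr ReflTransGen.refl
  | cons hr hw' hwI hws he ih =>
    rename_i w0 P0 I0 w'0 e0
    intro x y hy hyx
    have hmono : ∀ {a b : V},
        ReflTransGen (fun a b => a ≠ x ∧ b ≠ x ∧ D.adjOn P0 a b) a b →
        ReflTransGen (fun a b => a ≠ x ∧ b ≠ x ∧ D.adjOn (insert e0 P0) a b) a b :=
      fun h => h.mono_old fun a b hab => ⟨hab.1, hab.2.1, D.adjOn_mono (Set.subset_insert _ _) hab.2.2⟩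
    rcases hy with rfl | rfl | hy
    · exact Or.inl ReflTransGen.refl
    · exact Or.inr ReflTransGen.refl
    · -- y is on the old path
      by_cases hxw' : x = w'0
      · -- x is the new endpoint, not on the old path: use plain connectivity
        refine Or.inl (hmono ?_)
        refine D.rtg_avoid_of_not_mem
          (D.reach_conn_s hr y (Set.mem_insert_of_mem _ hy)) ?_
        rw [D.reach_verts hr, hxw']
        rintro (h | h)
        · exact hws h
        · exact hwI h
      · rcases ih x y (Set.mem_insert_of_mem _ hy) hyx with hres | hres
        · exact Or.inl (hmono hres)
        · refine Or.inr ((hmono hres).tail ?_)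
          have hw0x : w0 ≠ x := rtg_avoid_last_ne hres hyx
          exact ⟨hw0x, fun h => hxw' h.symm, ⟨e0, Set.mem_insert _ _, he⟩⟩

theorem reach_trunc {S : Set V} {s w : V} {P : Set E} {I : Set V}
    (h : Reach D S s w P I) : ∀ v ∈ I, ∃ P' I', P' ⊆ P ∧ I' ⊆ I ∧ Reach D S s v P' I' := by
  induction h with
  | base hw hws he =>
    rintro v hv
    rw [Set.mem_singleton_iff] at hv; subst hv
    exact ⟨_, _, Set.Subset.rfl, Set.Subset.rfl, Reach.base hw hws he⟩
  | cons hr hw' hwI hws he ih =>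
    rintro v (rfl | hv)
    · exact ⟨_, _, Set.Subset.rfl, Set.Subset.rfl, Reach.cons hr hw' hwI hws he⟩
    · obtain ⟨P', I', hP', hI', hr'⟩ := ih v hv
      exact ⟨P', I', hP'.trans (Set.subset_insert _ _), hI'.trans (Set.subset_insert _ _), hr'⟩

theorem outConn_not_mem {S : Set V} {u w : V} (h : D.outConn S u w) (hu : u ∉ S) :
    w ∉ S := by
  induction h with
  | refl => exact hu
  | tail _ hstep _ => exact hstep.2.1

theorem reach_extend {S : Set V} {s w : V} {P : Set E} {I : Set V}
    (hr : Reach D S s w P I) (hsS : s ∈ S) {w2 : V} (hcon : D.outConn S w w2) :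
    ∃ P' I', Reach D S s w2 P' I' := by
  induction hcon with
  | refl => exact ⟨P, I, hr⟩
  | tail _ hstep ih =>
    rename_i b c _
    obtain ⟨P', I', hr'⟩ := ih
    by_cases hcI : c ∈ I'
    · obtain ⟨P'', I'', _, _, hr''⟩ := D.reach_trunc hr' c hcI
      exact ⟨P'', I'', hr''⟩
    · have hcs : c ≠ s := fun h => hstep.2.1 (h ▸ hsS)
      obtain ⟨e, hee⟩ := hstep.2.2
      exact ⟨_, _, Reach.cons hr' hstep.2.1 hcI hcs hee⟩


theorem rtg_symm {α : Type*} {r : α → α → Prop} (hr : ∀ a b, r a b → r b a) {a b : α}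
    (h : ReflTransGen r a b) : ReflTransGen r b a := by
  induction h with
  | refl => exact ReflTransGen.refl
  | tail _ hstep ih => exact (ReflTransGen.single (hr _ _ hstep)).trans ih

theorem adj_symm {a b : V} (h : D.Adj a b) : D.Adj b a := by
  obtain ⟨e, hh⟩ := h; exact ⟨e, hh.symm⟩

theorem outConn_symm {S : Set V} {a b : V} (h : D.outConn S a b) : D.outConn S b a := by
  induction h with
  | refl => exact ReflTransGen.refl
  | tail _ hs ih =>
      refine ReflTransGen.trans ?_ ih
      exact ReflTransGen.single ⟨hs.2.1, hs.1, D.adj_symm hs.2.2⟩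

theorem attach_of_adj {S : Set V} {u s : V} (hs : s ∈ S) (h : D.Adj u s) :
    s ∈ D.attach S u := ⟨hs, u, ReflTransGen.refl, h⟩

theorem attach_of_conn {S : Set V} {u w : V} (h : D.outConn S u w) :
    D.attach S w ⊆ D.attach S u := by
  rintro s ⟨hsS, w2, hw2, hadj⟩
  exact ⟨hsS, w2, h.trans hw2, hadj⟩

theorem mem_val_image {S : Set V} {Y : Set S} (w : V) (hw : w ∈ S) :
    w ∈ Subtype.val '' Y ↔ (⟨w, hw⟩ : S) ∈ Y := by
  constructor
  · rintro ⟨y, hy, hyw⟩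
    rwa [show (⟨w, hw⟩ : S) = y from (Subtype.ext hyw).symm]
  · intro h; exact ⟨⟨w, hw⟩, h, rfl⟩

theorem attach_subsingleton {A : Set E} (hA : D.IsBlock A)
    (hl : ∀ e : E, D.tail e ≠ D.head e) (u : V) (hu : u ∉ D.vertsOf A) :
    (D.attach (D.vertsOf A) u).Subsingleton := by
  classical
  intro s hs t ht
  by_contra hst
  obtain ⟨hsS, w₁, hw₁con, hw₁adj⟩ := hs
  obtain ⟨htS, w₂, hw₂con, hw₂adj⟩ := ht
  have hw₁S : w₁ ∉ D.vertsOf A := D.outConn_not_mem hw₁con hu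
  obtain ⟨e₁, he₁⟩ := hw₁adj
  have hbase : Reach D (D.vertsOf A) s w₁ {e₁} {w₁} :=
    Reach.base hw₁S (fun h => hw₁S (h ▸ hsS)) he₁.symm
  obtain ⟨P, I, hr⟩ := D.reach_extend hbase hsS ((D.outConn_symm hw₁con).trans hw₂con)
  obtain ⟨e₂, he₂⟩ := hw₂adj
  have hdisj := D.reach_disjoint hr
  have hw₂I : w₂ ∈ I := D.reach_mem_last hr
  have hverts : D.vertsOf P = insert s I := D.reach_verts hr
  have hw₂S : w₂ ∉ D.vertsOf A := hdisj.1 w₂ hw₂I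
  -- the candidate superset
  set Q : Set E := A ∪ insert e₂ P with hQdef
  have hAQ : A ⊆ Q := Set.subset_union_left
  have hPQ : P ⊆ Q := (Set.subset_insert _ _).trans Set.subset_union_right
  have he₂Q : e₂ ∈ Q := Or.inr (Set.mem_insert _ _)
  have hadjQ : D.adjOn Q w₂ t := ⟨e₂, he₂Q, he₂⟩
  have hvQ : ∀ y, y ∈ D.vertsOf Q → y ∈ D.vertsOf A ∨ y ∈ insert s I := by
    rintro y ⟨f, hf, hy⟩
    rcases hf with hf | hf
    · exact Or.inl ⟨f, hf, hy⟩
    · rcases hf with rfl | hf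
      · rcases he₂ with ⟨h1, h2⟩ | ⟨h1, h2⟩ <;> rcases hy with h | h
        · exact Or.inr (Set.mem_insert_of_mem _ ((h1 ▸ h : w₂ = y) ▸ hw₂I))
        · exact Or.inl ((h2 ▸ h : t = y) ▸ htS)
        · exact Or.inl ((h1 ▸ h : t = y) ▸ htS)
        · exact Or.inr (Set.mem_insert_of_mem _ ((h2 ▸ h : w₂ = y) ▸ hw₂I))
      · have : y ∈ D.vertsOf P := ⟨f, hf, hy⟩
        rw [hverts] at this
        exact Or.inr this
  have hSQ : ∀ y, y ∈ D.vertsOf A → y ∈ D.vertsOf Q := fun y hy => D.vertsOf_mono hAQ hy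
  have hNS1 : ∀ y ∈ D.vertsOf Q, ∀ z ∈ D.vertsOf Q, ReflTransGen (D.adjOn Q) y z := by
    have reach1 : ∀ y, y ∈ D.vertsOf Q → ∃ z ∈ D.vertsOf A, ReflTransGen (D.adjOn Q) y z := by
      intro y hy
      rcases hvQ y hy with hyS | hyI
      · exact ⟨y, hyS, ReflTransGen.refl⟩
      · exact ⟨s, hsS, (D.reach_conn_s hr y hyI).mono_old fun a b => D.adjOn_mono hPQ⟩
    intro y hy z hz
    obtain ⟨zy, hzy, hry⟩ := reach1 y hy
    obtain ⟨zz, hzz, hrz⟩ := reach1 z hz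
    refine (hry.trans ((hA.2.1.1 zy hzy zz hzz).mono_old fun a b => D.adjOn_mono hAQ)).trans ?_
    exact rtg_symm (fun a b => D.adjOn_symm) hrz
  have hNS2 : ∀ (x y z : V), y ∈ D.vertsOf Q → z ∈ D.vertsOf Q → y ≠ x → z ≠ x →
      ReflTransGen (fun a b => a ≠ x ∧ b ≠ x ∧ D.adjOn Q a b) y z := by
    intro x
    have reach2 : ∀ y, y ∈ D.vertsOf Q → y ≠ x → ∃ zz, zz ∈ D.vertsOf A ∧ zz ≠ x ∧
        ReflTransGen (fun a b => a ≠ x ∧ b ≠ x ∧ D.adjOn Q a b) y zz := by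
      intro y hy hyx
      have hmonoQ : ∀ {a b : V},
          ReflTransGen (fun a b => a ≠ x ∧ b ≠ x ∧ D.adjOn P a b) a b →
          ReflTransGen (fun a b => a ≠ x ∧ b ≠ x ∧ D.adjOn Q a b) a b :=
        fun h => h.mono_old fun a b hab => ⟨hab.1, hab.2.1, D.adjOn_mono hPQ hab.2.2⟩
      rcases hvQ y hy with hyS | hyI
      · exact ⟨y, hyS, hyx, ReflTransGen.refl⟩
      · by_cases hxt : x = t
        · refine ⟨s, hsS, fun h => hst (h.trans hxt), ?_⟩
          refine hmonoQ (D.rtg_avoid_of_not_mem (D.reach_conn_s hr y hyI) ?_)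
          rw [hverts, hxt]
          rintro (h | h)
          · exact hst h.symm
          · exact hdisj.1 t h htS
        · rcases D.reach_inv hr x y hyI hyx with hres | hres
          · have hsx : s ≠ x := rtg_avoid_last_ne hres hyx
            exact ⟨s, hsS, hsx, hmonoQ hres⟩
          · have hw₂x : w₂ ≠ x := rtg_avoid_last_ne hres hyx
            refine ⟨t, htS, fun h => hxt h.symm, ?_⟩
            exact (hmonoQ hres).tail ⟨hw₂x, fun h => hxt h.symm, hadjQ⟩
    intro y z hy hz hyx hzx
    obtain ⟨zy, hzy, hzyx, hry⟩ := reach2 y hy hyx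
    obtain ⟨zz, hzz, hzzx, hrz⟩ := reach2 z hz hzx
    refine (hry.trans ((hA.2.1.2 x zy zz hzy hzz hzyx hzzx).mono_old
      fun a b hab => ⟨hab.1, hab.2.1, D.adjOn_mono hAQ hab.2.2⟩)).trans ?_
    exact rtg_symm (fun a b hab => ⟨hab.2.1, hab.1, D.adjOn_symm hab.2.2⟩) hrz
  have hQA : Q = A := hA.2.2 Q ⟨hNS1, hNS2⟩ hAQ
  have hw₂verts : w₂ ∈ D.vertsOf Q := by
    refine D.vertsOf_mono hPQ ?_
    rw [hverts]
    exact Set.mem_insert_of_mem _ hw₂I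
  rw [hQA] at hw₂verts
  exact hw₂S hw₂verts

theorem attach_nonempty {A : Set E} (hA : A.Nonempty) (hc : D.WeaklyConnected)
    {u : V} (hu : u ∉ D.vertsOf A) : (D.attach (D.vertsOf A) u).Nonempty := by
  obtain ⟨e, he⟩ := hA
  set S := D.vertsOf A with hS
  have key : ∀ v, ReflTransGen D.Adj u v →
      (D.attach S u).Nonempty ∨ (v ∉ S ∧ D.outConn S u v) := by
    intro v h
    induction h with
    | refl => exact Or.inr ⟨hu, ReflTransGen.refl⟩
    | tail _ hadj ih =>
      rcases ih with h' | ⟨hbS, hconn⟩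
      · exact Or.inl h'
      · rename_i b c _
        by_cases hcS : c ∈ S
        · exact Or.inl ⟨c, (D.attach_of_conn hconn) (D.attach_of_adj hcS hadj)⟩
        · exact Or.inr ⟨hcS, hconn.tail ⟨hbS, hcS, hadj⟩⟩
  rcases key (D.tail e) (hc u (D.tail e)) with h' | ⟨hns, _⟩
  · exact h'
  · exact absurd ⟨e, he, Or.inl rfl⟩ hns

theorem ext_dicut {A : Set E} (hA : D.IsBlock A) (hl : ∀ e : E, D.tail e ≠ D.head e)
    {Y : Set (D.vertsOf A)} {B : Set A} (h : (D.subD A).DicutWith Y B) :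
    D.DicutWith (D.extShore A (Subtype.val '' Y)) (Subtype.val '' B) := by
  classical
  have hYvS : ∀ {w : V}, w ∈ Subtype.val '' Y → w ∈ D.vertsOf A := by
    rintro w ⟨y, _, rfl⟩; exact y.2
  constructor
  · intro e hte
    rcases hte with htY | ⟨htS, hatt⟩
    · have htS : D.tail e ∈ D.vertsOf A := hYvS htY
      by_cases hloop : D.tail e = D.head e
      · exact Or.inl (hloop ▸ htY)
      by_cases hhS : D.head e ∈ D.vertsOf A
      · have heA : e ∈ A := D.edge_mem_block hA hloop htS hhS
        have := h.1 ⟨e, heA⟩ ((mem_val_image (D.tail e) htS).mp htY)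
        exact Or.inl ((mem_val_image (D.head e) hhS).mpr this)
      · refine Or.inr ⟨hhS, ?_⟩
        have htail_att : D.tail e ∈ D.attach (D.vertsOf A) (D.head e) :=
          D.attach_of_adj htS (D.adj_symm ⟨e, Or.inl ⟨rfl, rfl⟩⟩)
        intro s hs
        rwa [D.attach_subsingleton hA hl (D.head e) hhS hs htail_att]
    · by_cases hhS : D.head e ∈ D.vertsOf A
      · exact Or.inl (hatt (D.attach_of_adj hhS ⟨e, Or.inl ⟨rfl, rfl⟩⟩))
      · refine Or.inr ⟨hhS, ?_⟩
        refine subset_trans (D.attach_of_conn ?_) hatt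
        exact ReflTransGen.single ⟨htS, hhS, ⟨e, Or.inl ⟨rfl, rfl⟩⟩⟩
  · ext e
    constructor
    · rintro ⟨f, hfB, rfl⟩
      have hf2 := h.2 ▸ hfB
      obtain ⟨ht, hh⟩ := hf2
      have htS : D.tail f.1 ∈ D.vertsOf A := ⟨f.1, f.2, Or.inl rfl⟩
      have hhS : D.head f.1 ∈ D.vertsOf A := ⟨f.1, f.2, Or.inr rfl⟩
      constructor
      · rintro (htY | ⟨htS2, _⟩)
        · exact ht ((mem_val_image _ htS).mp htY)
        · exact htS2 htS
      · exact Or.inl ((mem_val_image _ hhS).mpr hh)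
    · rintro ⟨hte, hhe⟩
      rcases hhe with hhY | ⟨hhS, hatt⟩
      · have hhS : D.head e ∈ D.vertsOf A := hYvS hhY
        by_cases htS : D.tail e ∈ D.vertsOf A
        · have hloop : D.tail e ≠ D.head e := hl e
          have heA : e ∈ A := D.edge_mem_block hA hloop htS hhS
          refine ⟨⟨e, heA⟩, ?_, rfl⟩
          rw [h.2]
          refine ⟨fun hne => hte (Or.inl ((mem_val_image _ htS).mpr hne)), ?_⟩
          exact (mem_val_image _ hhS).mp hhY
        · exfalso
          apply hte
          refine Or.inr ⟨htS, ?_⟩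
          have hhead_att : D.head e ∈ D.attach (D.vertsOf A) (D.tail e) :=
            D.attach_of_adj hhS ⟨e, Or.inl ⟨rfl, rfl⟩⟩
          intro s hs
          rwa [D.attach_subsingleton hA hl (D.tail e) htS hs hhead_att]
      · exfalso
        apply hte
        by_cases htS : D.tail e ∈ D.vertsOf A
        · exact Or.inl (hatt (D.attach_of_adj htS (D.adj_symm ⟨e, Or.inl ⟨rfl, rfl⟩⟩)))
        · refine Or.inr ⟨htS, ?_⟩
          refine subset_trans (D.attach_of_conn ?_) hatt
          exact D.outConn_symm (ReflTransGen.single ⟨htS, hhS, ⟨e, Or.inl ⟨rfl, rfl⟩⟩⟩)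

theorem nested_same_block {A : Set E} (hA : D.IsBlock A)
    (hl : ∀ e : E, D.tail e ≠ D.head e) (hc : D.WeaklyConnected)
    {Y₁ Y₂ : Set (D.vertsOf A)}
    (h : Y₁ ⊆ Y₂ ∨ Y₂ ⊆ Y₁ ∨ Y₁ ⊆ Y₂ᶜ ∨ Y₂ᶜ ⊆ Y₁) :
    D.extShore A (Subtype.val '' Y₁) ⊆ D.extShore A (Subtype.val '' Y₂) ∨
    D.extShore A (Subtype.val '' Y₂) ⊆ D.extShore A (Subtype.val '' Y₁) ∨
    D.extShore A (Subtype.val '' Y₁) ⊆ (D.extShore A (Subtype.val '' Y₂))ᶜ ∨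
    (D.extShore A (Subtype.val '' Y₂))ᶜ ⊆ D.extShore A (Subtype.val '' Y₁) := by
  classical
  have hSv : ∀ (Z : Set (D.vertsOf A)), (Subtype.val '' Z : Set V) ⊆ D.vertsOf A := by
    rintro Z w ⟨y, _, rfl⟩; exact y.2
  have hmono : ∀ (Z₁ Z₂ : Set (D.vertsOf A)), Z₁ ⊆ Z₂ →
      D.extShore A (Subtype.val '' Z₁) ⊆ D.extShore A (Subtype.val '' Z₂) := by
    intro Z₁ Z₂ hZ u hu
    have himg : (Subtype.val '' Z₁ : Set V) ⊆ Subtype.val '' Z₂ := Set.image_mono hZ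
    rcases hu with hu | ⟨huS, hatt⟩
    · exact Or.inl (himg hu)
    · exact Or.inr ⟨huS, hatt.trans himg⟩
  have hcompl : ∀ (Z₁ Z₂ : Set (D.vertsOf A)), Z₁ ⊆ Z₂ᶜ →
      D.extShore A (Subtype.val '' Z₁) ⊆ (D.extShore A (Subtype.val '' Z₂))ᶜ := by
    intro Z₁ Z₂ hZ u hu hu2
    rcases hu with hu | ⟨huS, hatt⟩
    · obtain ⟨y, hy, rfl⟩ := hu
      rcases hu2 with hu2 | ⟨huS2, _⟩
      · exact hZ hy ((mem_val_image _ y.2).mp hu2)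
      · exact huS2 y.2
    · rcases hu2 with hu2 | ⟨_, hatt2⟩
      · exact huS (hSv Z₂ hu2)
      · obtain ⟨s, hs⟩ := D.attach_nonempty hA.1 hc huS
        have hs1 := hatt hs
        have hs2 := hatt2 hs
        obtain ⟨y1, hy1, hy1e⟩ := hs1
        obtain ⟨y2, hy2, hy2e⟩ := hs2
        have : y1 = y2 := Subtype.ext (hy1e.trans hy2e.symm)
        exact hZ hy1 (this ▸ hy2)
  have hcompl2 : ∀ (Z₁ Z₂ : Set (D.vertsOf A)), Z₂ᶜ ⊆ Z₁ →
      (D.extShore A (Subtype.val '' Z₂))ᶜ ⊆ D.extShore A (Subtype.val '' Z₁) := by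
    intro Z₁ Z₂ hZ u hu
    by_cases huS : u ∈ D.vertsOf A
    · have : (⟨u, huS⟩ : D.vertsOf A) ∉ Z₂ := by
        intro hmem
        exact hu (Or.inl ((mem_val_image _ huS).mpr hmem))
      exact Or.inl ((mem_val_image _ huS).mpr (hZ this))
    · have : ¬ D.attach (D.vertsOf A) u ⊆ Subtype.val '' Z₂ := by
        intro hsub
        exact hu (Or.inr ⟨huS, hsub⟩)
      obtain ⟨s, hsatt, hsZ2⟩ := Set.not_subset.mp this
      have hsS : s ∈ D.vertsOf A := hsatt.1
      have hsZ1 : s ∈ Subtype.val '' Z₁ := by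
        refine (mem_val_image _ hsS).mpr (hZ ?_)
        intro hmem
        exact hsZ2 ((mem_val_image _ hsS).mpr hmem)
      refine Or.inr ⟨huS, ?_⟩
      intro t ht
      rwa [D.attach_subsingleton hA hl u huS ht hsatt]
  rcases h with h | h | h | h
  · exact Or.inl (hmono _ _ h)
  · exact Or.inr (Or.inl (hmono _ _ h))
  · exact Or.inr (Or.inr (Or.inl (hcompl _ _ h)))
  · exact Or.inr (Or.inr (Or.inr (hcompl2 _ _ h)))

theorem outConn_convert {S₁ S₂ : Set V} {u : V} (hu2 : u ∉ S₂) :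
    ∀ w, D.outConn S₁ u w →
      (∃ q, q ∈ S₂ ∧ q ∉ S₁ ∧ D.outConn S₁ u q) ∨ (w ∉ S₂ ∧ D.outConn S₂ u w) := by
  intro w h
  induction h with
  | refl => exact Or.inr ⟨hu2, ReflTransGen.refl⟩
  | tail hw hstep ih =>
    rename_i b c
    rcases ih with hq | ⟨hb2, hw2⟩
    · exact Or.inl hq
    · by_cases hc2 : c ∈ S₂
      · exact Or.inl ⟨c, hc2, hstep.2.1, hw.tail hstep⟩
      · exact Or.inr ⟨hc2, hw2.tail ⟨hb2, hc2, hstep.2.2⟩⟩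

theorem cross_factA {A₁ A₂ : Set E} (h₁ : D.IsBlock A₁) (h₂ : D.IsBlock A₂)
    (hne : A₁ ≠ A₂) (hl : ∀ e : E, D.tail e ≠ D.head e) (hc : D.WeaklyConnected)
    (Yv : Set V) (hYv : Yv ⊆ D.vertsOf A₁) :
    ∃ a : V,
      (∀ u, u ∈ D.vertsOf A₂ → (u ∈ D.extShore A₁ Yv ↔ a ∈ Yv)) ∧
      (∀ u, u ∉ D.vertsOf A₁ → u ∉ D.vertsOf A₂ →
        ((∃ q, q ∈ D.vertsOf A₂ ∧ q ∉ D.vertsOf A₁ ∧ D.outConn (D.vertsOf A₁) u q) ∨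
         (∀ s ∈ D.attach (D.vertsOf A₁) u, s ∈ D.vertsOf A₂)) →
        (u ∈ D.extShore A₁ Yv ↔ a ∈ Yv)) := by
  classical
  have hsub := D.blocks_verts_share_le_one h₁ h₂ hne
  obtain ⟨e₂, he₂⟩ := h₂.1
  have hte : D.tail e₂ ∈ D.vertsOf A₂ := ⟨e₂, he₂, Or.inl rfl⟩
  have hhe : D.head e₂ ∈ D.vertsOf A₂ := ⟨e₂, he₂, Or.inr rfl⟩
  obtain ⟨p₂, hp₂2, hp₂1⟩ : ∃ p, p ∈ D.vertsOf A₂ ∧ p ∉ D.vertsOf A₁ := by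
    by_contra hcon
    push_neg at hcon
    exact hl e₂ (hsub ⟨hcon _ hte, hte⟩ ⟨hcon _ hhe, hhe⟩)
  have hK2 : ∀ p q, p ∈ D.vertsOf A₂ → p ∉ D.vertsOf A₁ → q ∈ D.vertsOf A₂ →
      q ∉ D.vertsOf A₁ → D.outConn (D.vertsOf A₁) p q := by
    intro p q hp2 hp1 hq2 hq1
    by_cases hint : (D.vertsOf A₁ ∩ D.vertsOf A₂).Nonempty
    · obtain ⟨c, hc1, hc2⟩ := hint
      have hpc : p ≠ c := fun h => hp1 (h ▸ hc1)
      have hqc : q ≠ c := fun h => hq1 (h ▸ hc1)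
      refine (h₂.2.1.2 c p q hp2 hq2 hpc hqc).mono_old ?_
      rintro x y ⟨hxc, hyc, hxy⟩
      exact ⟨fun hx1 => hxc (hsub ⟨hx1, D.adjOn_mem_left hxy⟩ ⟨hc1, hc2⟩),
        fun hy1 => hyc (hsub ⟨hy1, D.adjOn_mem_right hxy⟩ ⟨hc1, hc2⟩), D.adjOn_adj hxy⟩
    · refine (h₂.2.1.1 p hp2 q hq2).mono_old ?_
      intro x y hxy
      exact ⟨fun hx1 => hint ⟨x, hx1, D.adjOn_mem_left hxy⟩,
        fun hy1 => hint ⟨y, hy1, D.adjOn_mem_right hxy⟩, D.adjOn_adj hxy⟩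
  obtain ⟨a, ha⟩ := D.attach_nonempty h₁.1 hc hp₂1
  have hattss := D.attach_subsingleton h₁ hl p₂ hp₂1
  have hK4 : ∀ c, c ∈ D.vertsOf A₁ → c ∈ D.vertsOf A₂ → a = c := by
    intro c hc1 hc2
    obtain ⟨f, hf, hcf⟩ := hc2
    obtain ⟨d, hd2, hdc, hdadj⟩ : ∃ d, d ∈ D.vertsOf A₂ ∧ d ≠ c ∧ D.Adj d c := by
      rcases hcf with h | h
      · exact ⟨D.head f, ⟨f, hf, Or.inr rfl⟩, fun hh => hl f (by rw [h, hh]),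
          ⟨f, Or.inr ⟨h, rfl⟩⟩⟩
      · exact ⟨D.tail f, ⟨f, hf, Or.inl rfl⟩, fun hh => hl f (by rw [h, hh]),
          ⟨f, Or.inl ⟨rfl, h⟩⟩⟩
    have hd1 : d ∉ D.vertsOf A₁ := fun hd1 => hdc (hsub ⟨hd1, hd2⟩ ⟨hc1, ⟨f, hf, hcf⟩⟩)
    exact hattss ha ⟨hc1, d, hK2 p₂ d hp₂2 hp₂1 hd2 hd1, hdadj⟩
  have hattiff : ∀ u, u ∉ D.vertsOf A₁ →
      D.attach (D.vertsOf A₁) u = D.attach (D.vertsOf A₁) p₂ →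
      (u ∈ D.extShore A₁ Yv ↔ a ∈ Yv) := by
    intro u hu1 heq
    constructor
    · rintro (hY | ⟨_, hatt⟩)
      · exact absurd (hYv hY) hu1
      · exact hatt (heq ▸ ha)
    · intro haY
      refine Or.inr ⟨hu1, ?_⟩
      rw [heq]
      intro s hs
      rwa [hattss hs ha]
  refine ⟨a, ?_, ?_⟩
  · intro u hu2
    by_cases hu1 : u ∈ D.vertsOf A₁
    · have hau : a = u := hK4 u hu1 hu2
      constructor
      · rintro (hY | ⟨hu1', _⟩)
        · rwa [hau]
        · exact absurd hu1 hu1'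
      · intro haY; exact Or.inl (hau ▸ haY)
    · refine hattiff u hu1 ?_
      have hup : D.outConn (D.vertsOf A₁) p₂ u := hK2 p₂ u hp₂2 hp₂1 hu2 hu1
      exact Set.Subset.antisymm (D.attach_of_conn hup)
        (D.attach_of_conn (D.outConn_symm hup))
  · intro u hu1 hu2 hcase
    rcases hcase with ⟨q, hq2, hq1, hconn⟩ | hattS
    · refine hattiff u hu1 ?_
      have hup : D.outConn (D.vertsOf A₁) u p₂ := hconn.trans (hK2 q p₂ hq2 hq1 hp₂2 hp₂1)
      exact Set.Subset.antisymm (D.attach_of_conn (D.outConn_symm hup))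
        (D.attach_of_conn hup)
    · obtain ⟨cc, hccatt⟩ := D.attach_nonempty h₁.1 hc hu1
      have hacc : a = cc := hK4 cc hccatt.1 (hattS cc hccatt)
      have hattu := D.attach_subsingleton h₁ hl u hu1
      constructor
      · rintro (hY | ⟨_, hatt⟩)
        · exact absurd (hYv hY) hu1
        · exact hacc ▸ (hatt hccatt)
      · intro haY
        refine Or.inr ⟨hu1, fun s hs => ?_⟩
        rw [hattu hs hccatt]
        exact hacc ▸ haY

theorem nested_cross_block {A₁ A₂ : Set E} (h₁ : D.IsBlock A₁) (h₂ : D.IsBlock A₂)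
    (hne : A₁ ≠ A₂) (hl : ∀ e : E, D.tail e ≠ D.head e) (hc : D.WeaklyConnected)
    {Y₁ : Set (D.vertsOf A₁)} {Y₂ : Set (D.vertsOf A₂)}
    {B₁ : Set A₁} {B₂ : Set A₂}
    (hd₁ : (D.subD A₁).DicutWith Y₁ B₁) (hd₂ : (D.subD A₂).DicutWith Y₂ B₂) :
    D.extShore A₁ (Subtype.val '' Y₁) ⊆ D.extShore A₂ (Subtype.val '' Y₂) ∨
    D.extShore A₂ (Subtype.val '' Y₂) ⊆ D.extShore A₁ (Subtype.val '' Y₁) ∨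
    D.extShore A₁ (Subtype.val '' Y₁) ⊆ (D.extShore A₂ (Subtype.val '' Y₂))ᶜ ∨
    (D.extShore A₂ (Subtype.val '' Y₂))ᶜ ⊆ D.extShore A₁ (Subtype.val '' Y₁) := by
  classical
  have hYv₁ : (Subtype.val '' Y₁ : Set V) ⊆ D.vertsOf A₁ := by
    rintro w ⟨y, _, rfl⟩; exact y.2
  have hYv₂ : (Subtype.val '' Y₂ : Set V) ⊆ D.vertsOf A₂ := by
    rintro w ⟨y, _, rfl⟩; exact y.2
  obtain ⟨a, hiff₁, hCiff₁⟩ := D.cross_factA h₁ h₂ hne hl hc (Subtype.val '' Y₁) hYv₁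
  obtain ⟨b, hiff₂, hCiff₂⟩ := D.cross_factA h₂ h₁ hne.symm hl hc (Subtype.val '' Y₂) hYv₂
  have factC : ∀ u, u ∉ D.vertsOf A₁ → u ∉ D.vertsOf A₂ →
      ((u ∈ D.extShore A₁ (Subtype.val '' Y₁) ↔ a ∈ Subtype.val '' Y₁) ∨
       (u ∈ D.extShore A₂ (Subtype.val '' Y₂) ↔ b ∈ Subtype.val '' Y₂)) := by
    intro u hu1 hu2
    by_cases hi : ∃ q, q ∈ D.vertsOf A₂ ∧ q ∉ D.vertsOf A₁ ∧ D.outConn (D.vertsOf A₁) u q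
    · exact Or.inl (hCiff₁ u hu1 hu2 (Or.inl hi))
    · by_cases hii : ∃ q, q ∈ D.vertsOf A₁ ∧ q ∉ D.vertsOf A₂ ∧ D.outConn (D.vertsOf A₂) u q
      · exact Or.inr (hCiff₂ u hu2 hu1 (Or.inl hii))
      · refine Or.inl (hCiff₁ u hu1 hu2 (Or.inr ?_))
        intro s hs
        by_contra hs2
        obtain ⟨hs1, w, hw, hadj⟩ := hs
        rcases D.outConn_convert hu2 w hw with hq | ⟨hw2, hw2conn⟩
        · exact hi hq
        · exact hii ⟨s, hs1, hs2, hw2conn.tail ⟨hw2, hs2, hadj⟩⟩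
  by_cases hP : a ∈ Subtype.val '' Y₁ <;> by_cases hQ : b ∈ Subtype.val '' Y₂
  · refine Or.inr (Or.inr (Or.inr ?_))
    intro u hu
    by_cases hu2 : u ∈ D.vertsOf A₂
    · exact (hiff₁ u hu2).mpr hP
    by_cases hu1 : u ∈ D.vertsOf A₁
    · exact absurd ((hiff₂ u hu1).mpr hQ) hu
    rcases factC u hu1 hu2 with hiff | hiff
    · exact hiff.mpr hP
    · exact absurd (hiff.mpr hQ) hu
  · refine Or.inr (Or.inl ?_)
    intro u hu
    by_cases hu2 : u ∈ D.vertsOf A₂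
    · exact (hiff₁ u hu2).mpr hP
    by_cases hu1 : u ∈ D.vertsOf A₁
    · exact absurd ((hiff₂ u hu1).mp hu) hQ
    rcases factC u hu1 hu2 with hiff | hiff
    · exact hiff.mpr hP
    · exact absurd (hiff.mp hu) hQ
  · refine Or.inl ?_
    intro u hu
    by_cases hu1 : u ∈ D.vertsOf A₁
    · exact (hiff₂ u hu1).mpr hQ
    by_cases hu2 : u ∈ D.vertsOf A₂
    · exact absurd ((hiff₁ u hu2).mp hu) hP
    rcases factC u hu1 hu2 with hiff | hiff
    · exact absurd (hiff.mp hu) hP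
    · exact hiff.mpr hQ
  · refine Or.inr (Or.inr (Or.inl ?_))
    intro u hu hu2mem
    by_cases hu2 : u ∈ D.vertsOf A₂
    · exact hP ((hiff₁ u hu2).mp hu)
    by_cases hu1 : u ∈ D.vertsOf A₁
    · exact hQ ((hiff₂ u hu1).mp hu2mem)
    rcases factC u hu1 hu2 with hiff | hiff
    · exact hP (hiff.mp hu)
    · exact hQ (hiff.mp hu2mem)

/-! #### Countability of blocks -/


theorem reach_of_rtg {x : V} {s : V} (hs : s ≠ x) :
    ∀ {a : V}, ReflTransGen (fun p q => p ≠ x ∧ q ≠ x ∧ D.Adj p q) s a →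
      a = s ∨ ∃ P I, Reach D {x} s a P I := by
  intro a h
  induction h with
  | refl => exact Or.inl rfl
  | tail hw hstep ih =>
    rename_i b c
    by_cases hcs : c = s
    · exact Or.inl hcs
    · rcases ih with rfl | ⟨P, I, hr⟩
      · exact Or.inr ⟨_, _, Reach.base (fun h => hstep.2.1 h) hcs hstep.2.2.choose_spec⟩
      · by_cases hcI : c ∈ I
        · obtain ⟨P', I', _, _, hr'⟩ := D.reach_trunc hr c hcI
          exact Or.inr ⟨P', I', hr'⟩
        · exact Or.inr ⟨_, _, Reach.cons hr (fun h => hstep.2.1 h) hcI hcs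
            hstep.2.2.choose_spec⟩

theorem reach_last_core {S : Set V} {s w : V} {P : Set E} {I : Set V}
    (h : Reach D S s w P I) (R : Finset V) (hsR : s ∈ R) (hw : w ∉ R) :
    ∃ (z : V) (P₂ : Set E) (I₂ : Set V), z ∈ R ∧ I₂ ⊆ I ∧ Reach D S z w P₂ I₂ ∧
      ∀ y ∈ I₂, y ∉ R := by
  induction h with
  | base hwS hws he =>
    rename_i w0 e0
    exact ⟨s, {e0}, {w0}, hsR, Set.Subset.rfl, Reach.base hwS hws he,
      fun y hy => by rw [Set.mem_singleton_iff] at hy; rwa [hy]⟩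
  | cons hr hw' hwI hws he ih =>
    rename_i w0 P0 I0 w'0 e0
    by_cases hw0R : w0 ∈ R
    · refine ⟨w0, {e0}, {w'0}, hw0R, Set.singleton_subset_iff.mpr (Set.mem_insert _ _),
        Reach.base hw' (fun h => hwI (h ▸ D.reach_mem_last hr)) he,
        fun y hy => by rw [Set.mem_singleton_iff] at hy; rwa [hy]⟩
    · obtain ⟨z, P₂, I₂, hz, hI₂, hr₂, hno⟩ := ih hw0R
      refine ⟨z, insert e0 P₂, insert w'0 I₂, hz,
        Set.insert_subset (Set.mem_insert _ _) (hI₂.trans (Set.subset_insert _ _)),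
        Reach.cons hr₂ hw' (fun h => hwI (hI₂ h)) (fun h => hw (h ▸ hz)) he, ?_⟩
      rintro y (rfl | hy)
      · exact hw
      · exact hno y hy

theorem reach_cross {S : Set V} {s w : V} {P : Set E} {I : Set V}
    (h : Reach D S s w P I) {X : Set V} (hout : ∀ e : E, D.tail e ∈ X → D.head e ∈ X)
    (hsw : (s ∈ X ∧ w ∉ X) ∨ (s ∉ X ∧ w ∈ X)) :
    ∃ e : E, D.tail e ∉ X ∧ D.head e ∈ X ∧
      D.tail e ∈ insert s I ∧ D.head e ∈ insert s I := by
  induction h with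
  | base hwS hws he =>
    rename_i w0 e0
    rcases hsw with ⟨hs, hw'⟩ | ⟨hs, hw'⟩
    · rcases he with ⟨h1, h2⟩ | ⟨h1, h2⟩
      · exact absurd (hout e0 (by rw [h1]; exact hs)) (by rw [h2]; exact hw')
      · refine ⟨e0, by rw [h1]; exact hw', by rw [h2]; exact hs, ?_, ?_⟩
        · rw [h1]; exact Set.mem_insert_of_mem _ rfl
        · rw [h2]; exact Set.mem_insert _ _
    · rcases he with ⟨h1, h2⟩ | ⟨h1, h2⟩
      · refine ⟨e0, by rw [h1]; exact hs, by rw [h2]; exact hw', ?_, ?_⟩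
        · rw [h1]; exact Set.mem_insert _ _
        · rw [h2]; exact Set.mem_insert_of_mem _ rfl
      · exact absurd (hout e0 (by rw [h1]; exact hw')) (by rw [h2]; exact hs)
  | cons hr hw' hwI hws he ih =>
    rename_i w0 P0 I0 w'0 e0
    have hsub : insert s I0 ⊆ insert s (insert w'0 I0) := by
      rintro y (rfl | hy)
      · exact Set.mem_insert _ _
      · exact Set.mem_insert_of_mem _ (Set.mem_insert_of_mem _ hy)
    have hw0I : w0 ∈ insert s (insert w'0 I0) :=
      Set.mem_insert_of_mem _ (Set.mem_insert_of_mem _ (D.reach_mem_last hr))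
    have hw'I : w'0 ∈ insert s (insert w'0 I0) :=
      Set.mem_insert_of_mem _ (Set.mem_insert _ _)
    rcases hsw with ⟨hs, hwX⟩ | ⟨hs, hwX⟩
    · by_cases hw0X : w0 ∈ X
      · rcases he with ⟨h1, h2⟩ | ⟨h1, h2⟩
        · exact absurd (hout e0 (by rw [h1]; exact hw0X)) (by rw [h2]; exact hwX)
        · exact ⟨e0, by rw [h1]; exact hwX, by rw [h2]; exact hw0X,
            by rw [h1]; exact hw'I, by rw [h2]; exact hw0I⟩
      · obtain ⟨e, he1, he2, he3, he4⟩ := ih (Or.inl ⟨hs, hw0X⟩)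
        exact ⟨e, he1, he2, hsub he3, hsub he4⟩
    · by_cases hw0X : w0 ∈ X
      · obtain ⟨e, he1, he2, he3, he4⟩ := ih (Or.inr ⟨hs, hw0X⟩)
        exact ⟨e, he1, he2, hsub he3, hsub he4⟩
      · rcases he with ⟨h1, h2⟩ | ⟨h1, h2⟩
        · exact ⟨e0, by rw [h1]; exact hw0X, by rw [h2]; exact hwX,
            by rw [h1]; exact hw0I, by rw [h2]; exact hw'I⟩
        · exact absurd (hout e0 (by rw [h1]; exact hwX)) (by rw [h2]; exact hw0X)

theorem parallel_finite (hl : ∀ e : E, D.tail e ≠ D.head e) (hd : D.FinitelyDiseparable)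
    (u v : V) :
    {e : E | (D.tail e = u ∧ D.head e = v) ∨ (D.tail e = v ∧ D.head e = u)}.Finite := by
  by_cases huv : u = v
  · subst huv
    refine Set.finite_empty.subset ?_
    rintro e (⟨h1, h2⟩ | ⟨h1, h2⟩) <;> exact absurd (h1.trans h2.symm) (hl e)
  · obtain ⟨X, B, hdi, hB, hside⟩ := hd u v huv
    refine hB.subset ?_
    rintro e (⟨h1, h2⟩ | ⟨h1, h2⟩)
    · rcases hside with ⟨hu, hv⟩ | ⟨hu, hv⟩
      · exact absurd (hdi.1 e (by rw [h1]; exact hu)) (by rw [h2]; exact hv)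
      · rw [hdi.2]
        exact ⟨by rw [h1]; exact hu, by rw [h2]; exact hv⟩
    · rcases hside with ⟨hu, hv⟩ | ⟨hu, hv⟩
      · rw [hdi.2]
        exact ⟨by rw [h1]; exact hv, by rw [h2]; exact hu⟩
      · exact absurd (hdi.1 e (by rw [h1]; exact hv)) (by rw [h2]; exact hu)

theorem verts_countable_of_incidence {A : Set E} {r : V}
    (hconn : ∀ v ∈ D.vertsOf A, ReflTransGen (D.adjOn A) r v)
    (hinc : ∀ v : V, {u | D.adjOn A v u}.Countable) : (D.vertsOf A).Countable := by
  classical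
  let Rch : ℕ → Set V := fun n => Nat.rec {r} (fun _ W => W ∪ ⋃ w ∈ W, {u | D.adjOn A w u}) n
  have hcnt : ∀ n, (Rch n).Countable := by
    intro n
    induction n with
    | zero => exact Set.countable_singleton r
    | succ n ihn => exact ihn.union (ihn.biUnion fun w _ => hinc w)
  have hmem : ∀ v, ReflTransGen (D.adjOn A) r v → ∃ n, v ∈ Rch n := by
    intro v h
    induction h with
    | refl => exact ⟨0, rfl⟩
    | tail _ hstep ihn =>
      obtain ⟨n, hn⟩ := ihn
      exact ⟨n + 1, Or.inr (Set.mem_biUnion hn hstep)⟩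
  refine (Set.countable_iUnion hcnt).mono ?_
  intro v hv
  exact Set.mem_iUnion.mpr (hmem v (hconn v hv))


theorem block_countable {A : Set E} (hA : D.IsBlock A)
    (hl : ∀ e : E, D.tail e ≠ D.head e) (hd : D.FinitelyDiseparable) :
    (D.vertsOf A).Countable ∧ A.Countable := by
  classical
  suffices hV : (D.vertsOf A).Countable by
    refine ⟨hV, ?_⟩
    have hsub : A ⊆ ⋃ u ∈ D.vertsOf A, ⋃ v ∈ D.vertsOf A,
        {e : E | (D.tail e = u ∧ D.head e = v) ∨ (D.tail e = v ∧ D.head e = u)} := by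
      intro e he
      exact Set.mem_biUnion ⟨e, he, Or.inl rfl⟩
        (Set.mem_biUnion ⟨e, he, Or.inr rfl⟩ (Or.inl ⟨rfl, rfl⟩))
    exact ((hV.biUnion fun u _ => hV.biUnion fun v _ =>
      (D.parallel_finite hl hd u v).countable).mono hsub)
  by_contra hVunc
  obtain ⟨estar, hestar⟩ := hA.1
  have : Nonempty E := ⟨estar⟩
  obtain ⟨v₀, hv₀N⟩ : ∃ v₀ : V, ¬ {u | D.adjOn A v₀ u}.Countable := by
    by_contra hcon
    push_neg at hcon
    obtain ⟨e₀, he₀⟩ := hA.1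
    have hroot : D.tail e₀ ∈ D.vertsOf A := ⟨e₀, he₀, Or.inl rfl⟩
    exact hVunc (D.verts_countable_of_incidence (fun v hv => hA.2.1.1 _ hroot v hv) hcon)
  have hNverts : ∀ a ∈ {u | D.adjOn A v₀ u}, a ∈ D.vertsOf A :=
    fun a ha => D.adjOn_mem_right ha
  have hNv₀ : ∀ a ∈ {u | D.adjOn A v₀ u}, a ≠ v₀ := by
    intro a ha h
    subst h
    obtain ⟨e, heA, hor⟩ := ha
    rcases hor with ⟨h1, h2⟩ | ⟨h1, h2⟩ <;> exact hl e (h1.trans h2.symm)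
  obtain ⟨r, hrN⟩ : {u | D.adjOn A v₀ u}.Nonempty := by
    rcases Set.eq_empty_or_nonempty {u | D.adjOn A v₀ u} with h | h
    · exact absurd (h ▸ Set.countable_empty) hv₀N
    · exact h
  have hrv₀ : r ≠ v₀ := hNv₀ r hrN
  have hN'unc : ¬ ({u | D.adjOn A v₀ u} \ {r} : Set V).Countable := by
    intro h
    refine hv₀N (((h.union (Set.countable_singleton r)).mono) fun u hu => ?_)
    by_cases hur : u = r
    · exact Or.inr hur
    · exact Or.inl ⟨hu, hur⟩
  have hpath : ∀ a ∈ {u | D.adjOn A v₀ u} \ {r}, ∃ P I, Reach D {v₀} r a P I := by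
    rintro a ⟨haN, har⟩
    have hwalk := hA.2.1.2 v₀ r a (hNverts r hrN) (hNverts a haN) hrv₀ (hNv₀ a haN)
    have hwalk2 : ReflTransGen (fun p q => p ≠ v₀ ∧ q ≠ v₀ ∧ D.Adj p q) r a :=
      hwalk.mono_old fun p q hpq => ⟨hpq.1, hpq.2.1, D.adjOn_adj hpq.2.2⟩
    rcases D.reach_of_rtg hrv₀ hwalk2 with h | h
    · exact absurd h har
    · exact h
  choose! PP II hPI using hpath
  have hfin : ∀ a ∈ {u | D.adjOn A v₀ u} \ {r}, (insert r (II a) : Set V).Finite :=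
    fun a ha => ((D.reach_finite (hPI a ha)).2.insert r)
  let f : V → Finset V := fun a =>
    if ha : a ∈ {u | D.adjOn A v₀ u} \ {r} then (hfin a ha).toFinset else ∅
  have hmemf : ∀ a (ha : a ∈ {u | D.adjOn A v₀ u} \ {r}) (y : V),
      y ∈ f a ↔ y ∈ insert r (II a) := by
    intro a ha y
    show y ∈ (if ha : a ∈ {u | D.adjOn A v₀ u} \ {r} then (hfin a ha).toFinset else ∅) ↔ _
    rw [dif_pos ha, Set.Finite.mem_toFinset]
  obtain ⟨R, T, hT1, hT2, hT3⟩ := delta_system f _ hN'unc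
  obtain ⟨a₁, ha₁, a₂, ha₂, ha₁₂⟩ : ∃ a₁ ∈ T, ∃ a₂ ∈ T, a₁ ≠ a₂ := by
    by_contra hcon
    push_neg at hcon
    apply hT2
    rcases Set.eq_empty_or_nonempty T with rfl | ⟨t, ht⟩
    · exact Set.countable_empty
    · exact (Set.countable_singleton t).mono fun u hu => hcon u hu t ht
  have hrR : r ∈ R := by
    rw [← hT3 a₁ ha₁ a₂ ha₂ ha₁₂]
    exact Finset.mem_inter.mpr ⟨(hmemf a₁ (hT1 ha₁) r).mpr (Set.mem_insert _ _),
      (hmemf a₂ (hT1 ha₂) r).mpr (Set.mem_insert _ _)⟩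
  have hT₂unc : ¬ (T \ ↑R : Set V).Countable := by
    intro h
    refine hT2 (((h.union R.countable_toSet).mono) fun u hu => ?_)
    by_cases huR : u ∈ (↑R : Set V)
    · exact Or.inr huR
    · exact Or.inl ⟨hu, huR⟩
  have hlast : ∀ a ∈ (T \ ↑R : Set V), ∃ (z : V) (PZ : Set E) (IZ : Set V), z ∈ R ∧
      IZ ⊆ II a ∧ Reach D {v₀} z a PZ IZ ∧ ∀ y ∈ IZ, y ∉ R := by
    rintro a ⟨haT, haR⟩
    obtain ⟨z, PZ, IZ, h1, h2, h3, h4⟩ :=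
      D.reach_last_core (hPI a (hT1 haT)) R hrR (fun h => haR (Finset.mem_coe.mpr h))
    exact ⟨z, PZ, IZ, h1, h2, h3, h4⟩
  choose! zz P₂ I₂ hzR hI₂ hr₂ hno using hlast
  obtain ⟨z, hzmem, hTzunc⟩ : ∃ z, z ∈ R ∧
      ¬ {a | a ∈ (T \ ↑R : Set V) ∧ zz a = z}.Countable := by
    by_contra hcon
    push_neg at hcon
    apply hT₂unc
    have hsub : (T \ ↑R : Set V) ⊆
        ⋃ z ∈ (↑R : Set V), {a | a ∈ (T \ ↑R : Set V) ∧ zz a = z} := fun a ha =>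
      Set.mem_biUnion (Finset.mem_coe.mpr (hzR a ha)) ⟨ha, rfl⟩
    exact ((R.countable_toSet.biUnion fun z hz => hcon z (Finset.mem_coe.mp hz)).mono hsub)
  have hzv₀ : z ≠ v₀ := by
    have hzf : z ∈ f a₁ := by
      rw [← hT3 a₁ ha₁ a₂ ha₂ ha₁₂] at hzmem
      exact (Finset.mem_inter.mp hzmem).1
    rcases (hmemf a₁ (hT1 ha₁) z).mp hzf with h | h
    · rw [h]; exact hrv₀
    · exact fun hh => (D.reach_disjoint (hPI a₁ (hT1 ha₁))).1 z h hh
  obtain ⟨X, B, hdi, hB, hside⟩ := hd z v₀ hzv₀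
  have hedge : ∀ a ∈ {a | a ∈ (T \ ↑R : Set V) ∧ zz a = z}, ∃ e ∈ A,
      (D.tail e = v₀ ∧ D.head e = a) ∨ (D.tail e = a ∧ D.head e = v₀) :=
    fun a ha => (hT1 ha.1.1).1
  choose! ee heeA heeor using hedge
  -- the part of the fiber on the same side as z is finite
  have hfinsame : {a | (a ∈ (T \ ↑R : Set V) ∧ zz a = z) ∧ (a ∈ X ↔ z ∈ X)}.Finite := by
    have himg : ee '' {a | (a ∈ (T \ ↑R : Set V) ∧ zz a = z) ∧ (a ∈ X ↔ z ∈ X)} ⊆ B := by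
      rintro _ ⟨a, ⟨haTz, haiff⟩, rfl⟩
      rw [hdi.2]
      rcases heeor a haTz with ⟨h1, h2⟩ | ⟨h1, h2⟩ <;> rcases hside with ⟨hz, hv⟩ | ⟨hz, hv⟩
      · exact ⟨by rw [h1]; exact hv, by rw [h2]; exact haiff.mpr hz⟩
      · refine absurd (haiff.mp ?_) hz
        have := hdi.1 (ee a) (by rw [h1]; exact hv)
        rwa [h2] at this
      · exact absurd (hdi.1 (ee a) (by rw [h1]; exact haiff.mpr hz)) (by rw [h2]; exact hv)
      · refine ⟨by rw [h1]; intro hh; exact hz (haiff.mp hh), by rw [h2]; exact hv⟩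
    have hinj : Set.InjOn ee {a | (a ∈ (T \ ↑R : Set V) ∧ zz a = z) ∧ (a ∈ X ↔ z ∈ X)} := by
      intro a ha b hb heq
      have haN : a ∈ {u | D.adjOn A v₀ u} := (hT1 ha.1.1.1).1
      have hbN : b ∈ {u | D.adjOn A v₀ u} := (hT1 hb.1.1.1).1
      rcases heeor a ha.1 with ⟨h1, h2⟩ | ⟨h1, h2⟩ <;>
        rcases heeor b hb.1 with ⟨h3, h4⟩ | ⟨h3, h4⟩
      · rw [← h2, heq, h4]
      · exfalso
        refine hNv₀ b hbN (h3.symm.trans ?_)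
        rw [← heq, h1]
      · exfalso
        refine hNv₀ a haN (h1.symm.trans ?_)
        rw [heq, h3]
      · rw [← h1, heq, h3]
    exact Set.Finite.of_finite_image (hB.subset himg) hinj
  have hcross : ∀ a ∈ {a | (a ∈ (T \ ↑R : Set V) ∧ zz a = z) ∧ ¬(a ∈ X ↔ z ∈ X)}, ∃ e : E,
      D.tail e ∉ X ∧ D.head e ∈ X ∧ D.tail e ∈ insert z (I₂ a) ∧
      D.head e ∈ insert z (I₂ a) := by
    rintro a ⟨haTz, haiff⟩
    have hreach := hr₂ a haTz.1
    rw [haTz.2] at hreach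
    refine D.reach_cross hreach hdi.1 ?_
    by_cases hzX : z ∈ X
    · exact Or.inl ⟨hzX, fun h => haiff ⟨fun _ => hzX, fun _ => h⟩⟩
    · refine Or.inr ⟨hzX, ?_⟩
      by_contra haX
      exact haiff ⟨fun h => absurd h haX, fun h => absurd h hzX⟩
  choose! gg hg1 hg2 hg3 hg4 using hcross
  have hfindiff : {a | (a ∈ (T \ ↑R : Set V) ∧ zz a = z) ∧ ¬(a ∈ X ↔ z ∈ X)}.Finite := by
    have himg : gg '' {a | (a ∈ (T \ ↑R : Set V) ∧ zz a = z) ∧ ¬(a ∈ X ↔ z ∈ X)} ⊆ B := by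
      rintro _ ⟨a, ha, rfl⟩
      rw [hdi.2]
      exact ⟨hg1 a ha, hg2 a ha⟩
    have hinj : Set.InjOn gg {a | (a ∈ (T \ ↑R : Set V) ∧ zz a = z) ∧ ¬(a ∈ X ↔ z ∈ X)} := by
      intro a ha b hb heq
      by_contra hab
      have hIab : ∀ y, y ∈ insert z (I₂ a) → y ∈ insert z (I₂ b) → y = z := by
        rintro y (rfl | hya) hyb
        · rfl
        · rcases hyb with rfl | hyb
          · rfl
          · exfalso
            have hyfa : y ∈ f a := (hmemf a (hT1 ha.1.1.1) y).mpr
              (Set.mem_insert_of_mem _ (hI₂ a ha.1.1 hya))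
            have hyfb : y ∈ f b := (hmemf b (hT1 hb.1.1.1) y).mpr
              (Set.mem_insert_of_mem _ (hI₂ b hb.1.1 hyb))
            have hyR : y ∈ R := by
              rw [← hT3 a ha.1.1.1 b hb.1.1.1 hab]
              exact Finset.mem_inter.mpr ⟨hyfa, hyfb⟩
            exact hno a ha.1.1 y hya hyR
      have hth : D.tail (gg a) ≠ D.head (gg a) := fun h => (hg1 a ha) (h ▸ hg2 a ha)
      have e1 := hIab _ (hg3 a ha) (by rw [heq]; exact hg3 b hb)
      have e2 := hIab _ (hg4 a ha) (by rw [heq]; exact hg4 b hb)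
      exact hth (e1.trans e2.symm)
    exact Set.Finite.of_finite_image (hB.subset himg) hinj
  apply hTzunc
  have hsubT : {a | a ∈ (T \ ↑R : Set V) ∧ zz a = z} ⊆
      {a | (a ∈ (T \ ↑R : Set V) ∧ zz a = z) ∧ (a ∈ X ↔ z ∈ X)} ∪
      {a | (a ∈ (T \ ↑R : Set V) ∧ zz a = z) ∧ ¬(a ∈ X ↔ z ∈ X)} := by
    intro a ha
    by_cases h : (a ∈ X ↔ z ∈ X)
    · exact Or.inl ⟨ha, h⟩
    · exact Or.inr ⟨ha, h⟩
  exact ((hfinsame.union hfindiff).countable).mono hsubT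

/-! #### Assembly -/

theorem assemble (hl : ∀ e : E, D.tail e ≠ D.head e) (hc : D.WeaklyConnected)
    (Nflag : Prop)
    (H : ∀ A : Set E, D.IsBlock A → ∃ (F : Set A) (ℬ : Set (Set A)),
      (D.subD A).OptimalPair F ℬ ∧ (Nflag → ℬ.Pairwise (D.subD A).NestedDicuts)) :
    ∃ (F : Set E) (ℬ : Set (Set E)), D.OptimalPair F ℬ ∧
      (Nflag → ℬ.Pairwise D.NestedDicuts) := by
  classical
  choose FF BB hOP hN using H
  have hsubA : ∀ (A : Set E) (X : Set A), (Subtype.val '' X : Set E) ⊆ A := by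
    rintro A X e ⟨f, _, rfl⟩; exact f.2
  refine ⟨⋃ (A : Set E) (hA : D.IsBlock A), Subtype.val '' FF A hA,
    {B | ∃ (A : Set E) (hA : D.IsBlock A), ∃ B' ∈ BB A hA, B = Subtype.val '' B'},
    ⟨?_, ?_, ?_, ?_, ?_⟩, ?_⟩
  · rintro B ⟨A, hA, B', hB', rfl⟩
    obtain ⟨Y, hY⟩ := ((hOP A hA).1 B' hB').1
    exact ⟨⟨_, D.ext_dicut hA hl hY⟩, ((hOP A hA).1 B' hB').2.image _⟩
  · rintro B₁ ⟨A₁, hA₁, B₁', hB₁', rfl⟩ B₂ ⟨A₂, hA₂, B₂', hB₂', rfl⟩ hne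
    by_cases hAA : A₁ = A₂
    · subst hAA
      have hne2 : B₁' ≠ B₂' := fun hh => hne (by rw [hh])
      exact (Set.disjoint_image_iff Subtype.val_injective).mpr
        ((hOP A₁ hA₁).2.1 hB₁' hB₂' hne2)
    · exact Disjoint.mono (hsubA A₁ B₁') (hsubA A₂ B₂')
        (D.blocks_disjoint hl hA₁ hA₂ hAA)
  · rintro B ⟨X, hX⟩ hBf hBn
    obtain ⟨e0, he0⟩ := hBn
    obtain ⟨A, hA, heA⟩ := D.exists_block hl e0
    have hres := D.restrict_dicut (A := A) hX
    have hfin : (Subtype.val ⁻¹' B : Set A).Finite :=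
      hBf.preimage Subtype.val_injective.injOn
    have hne2 : (Subtype.val ⁻¹' B : Set A).Nonempty := ⟨⟨e0, heA⟩, he0⟩
    obtain ⟨f, hf⟩ := (hOP A hA).2.2.1 _ ⟨_, hres⟩ hfin hne2
    refine ⟨f.1, ?_, hf.2⟩
    exact Set.mem_iUnion₂.mpr ⟨A, hA, ⟨f, hf.1, rfl⟩⟩
  · rintro e he
    obtain ⟨A, hA, he2⟩ := Set.mem_iUnion₂.mp he
    obtain ⟨f, hfF, rfl⟩ := he2
    obtain ⟨B', hB', hfB'⟩ := (hOP A hA).2.2.2.1 hfF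
    exact ⟨Subtype.val '' B', ⟨A, hA, B', hB', rfl⟩, ⟨f, hfB', rfl⟩⟩
  · rintro B ⟨A, hA, B', hB', rfl⟩
    have key : (⋃ (A2 : Set E) (hA2 : D.IsBlock A2), Subtype.val '' FF A2 hA2) ∩
        Subtype.val '' B' = Subtype.val '' (FF A hA ∩ B') := by
      apply Set.Subset.antisymm
      · rintro x ⟨hxF, hxB⟩
        obtain ⟨A₂, hA₂, hx2⟩ := Set.mem_iUnion₂.mp hxF
        obtain ⟨f, hfF, rfl⟩ := hx2
        by_cases hAA : A₂ = A
        · subst hAA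
          obtain ⟨g, hgB, hgx⟩ := hxB
          have hfg : g = f := Subtype.ext hgx
          refine ⟨f, ⟨hfF, ?_⟩, rfl⟩
          rw [← hfg]; exact hgB
        · exfalso
          obtain ⟨g, hgB, hgx⟩ := hxB
          exact Set.disjoint_left.mp (D.blocks_disjoint hl hA₂ hA hAA) f.2 (hgx ▸ g.2)
      · rintro x ⟨f, ⟨hfF, hfB⟩, rfl⟩
        exact ⟨Set.mem_iUnion₂.mpr ⟨A, hA, ⟨f, hfF, rfl⟩⟩, ⟨f, hfB, rfl⟩⟩
    rw [key, Set.ncard_image_of_injective _ Subtype.val_injective]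
    exact (hOP A hA).2.2.2.2 B' hB'
  · intro hNf
    rintro B₁ ⟨A₁, hA₁, B₁', hB₁', rfl⟩ B₂ ⟨A₂, hA₂, B₂', hB₂', rfl⟩ hne
    by_cases hAA : A₁ = A₂
    · subst hAA
      have hne2 : B₁' ≠ B₂' := fun hh => hne (by rw [hh])
      obtain ⟨Y₁, Y₂, hd₁, hd₂, hopt⟩ := hN A₁ hA₁ hNf hB₁' hB₂' hne2
      refine ⟨_, _, D.ext_dicut hA₁ hl hd₁, D.ext_dicut hA₁ hl hd₂, ?_⟩
      exact D.nested_same_block hA₁ hl hc hopt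
    · obtain ⟨Y₁, hd₁⟩ := ((hOP A₁ hA₁).1 B₁' hB₁').1
      obtain ⟨Y₂, hd₂⟩ := ((hOP A₂ hA₂).1 B₂' hB₂').1
      refine ⟨_, _, D.ext_dicut hA₁ hl hd₁, D.ext_dicut hA₂ hl hd₂, ?_⟩
      exact D.nested_cross_block hA₁ hA₂ hAA hl hc hd₁ hd₂

end Lemmas

end MultiDigraph

universe u v

/-- **Reduction theorem.** If every countable, finitely diseparable digraph
whose underlying multigraph is 2-connected admits an optimal pair, then every
weakly connected digraph admits an optimal pair; likewise for nested optimal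
pairs. -/
theorem reduction_to_countable_diseparable_twoConnected :
    ((∀ (V : Type u) (E : Type v) (D : MultiDigraph V E), Countable V → Countable E →
        D.FinitelyDiseparable → D.UnderlyingTwoConnected →
        ∃ (F : Set E) (ℬ : Set (Set E)), D.OptimalPair F ℬ) →
      ∀ (V : Type u) (E : Type v) (D : MultiDigraph V E), D.WeaklyConnected →
        ∃ (F : Set E) (ℬ : Set (Set E)), D.OptimalPair F ℬ) ∧
    ((∀ (V : Type u) (E : Type v) (D : MultiDigraph V E), Countable V → Countable E →
        D.FinitelyDiseparable → D.UnderlyingTwoConnected →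
        ∃ (F : Set E) (ℬ : Set (Set E)), D.NestedOptimalPair F ℬ) →
      ∀ (V : Type u) (E : Type v) (D : MultiDigraph V E), D.WeaklyConnected →
        ∃ (F : Set E) (ℬ : Set (Set E)), D.NestedOptimalPair F ℬ) := by
  classical
  constructor
  · intro H1 V E D hconn
    set D1 := D.quotD with hD1
    set D2 := D1.coreD with hD2
    have hl2 : ∀ e, D2.tail e ≠ D2.head e := fun e => e.2
    have hc2 : D2.WeaklyConnected := D1.core_weaklyConnected (D.quot_weaklyConnected hconn)
    have hd2 : D2.FinitelyDiseparable := D1.core_diseparable (D.quot_diseparable)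
    have key := D2.assemble hl2 hc2 False (fun A hA => by
      obtain ⟨cV, cE⟩ := D2.block_countable hA hl2 hd2
      have : Countable (D2.vertsOf A) := cV.to_subtype
      have : Countable A := cE.to_subtype
      obtain ⟨F, ℬ, hFB⟩ := H1 _ _ (D2.subD A) ‹_› ‹_›
        (D2.sub_diseparable hd2) (D2.sub_twoConnected hA)
      exact ⟨F, ℬ, hFB, fun h => h.elim⟩)
    obtain ⟨F2, ℬ2, h2, -⟩ := key
    obtain ⟨F1, ℬ1, h1⟩ : ∃ F1 ℬ1, D1.OptimalPair F1 ℬ1 :=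
      ⟨_, _, D1.optimalPair_core h2⟩
    exact ⟨F1, ℬ1, D.optimalPair_quot h1⟩
  · intro H1 V E D hconn
    set D1 := D.quotD with hD1
    set D2 := D1.coreD with hD2
    have hl2 : ∀ e, D2.tail e ≠ D2.head e := fun e => e.2
    have hc2 : D2.WeaklyConnected := D1.core_weaklyConnected (D.quot_weaklyConnected hconn)
    have hd2 : D2.FinitelyDiseparable := D1.core_diseparable (D.quot_diseparable)
    have key := D2.assemble hl2 hc2 True (fun A hA => by
      obtain ⟨cV, cE⟩ := D2.block_countable hA hl2 hd2
      have : Countable (D2.vertsOf A) := cV.to_subtype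
      have : Countable A := cE.to_subtype
      obtain ⟨F, ℬ, hFB, hN⟩ := H1 _ _ (D2.subD A) ‹_› ‹_›
        (D2.sub_diseparable hd2) (D2.sub_twoConnected hA)
      exact ⟨F, ℬ, hFB, fun _ => hN⟩)
    obtain ⟨F2, ℬ2, h2, hN2⟩ := key
    have hN2' := hN2 trivial
    have hB2 : ∀ B ∈ ℬ2, D2.IsDicut B := fun B hB => (h2.1 B hB).1
    refine ⟨Subtype.val '' F2, (Set.image Subtype.val) '' ℬ2,
      ⟨D.optimalPair_quot (D1.optimalPair_core h2), ?_⟩⟩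
    exact D.nested_quot (D1.nested_core hB2 hN2')
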